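/- Clo is sound: every sequent that has a Clo proof is valid. -/

import Mathlib

set_option linter.unusedVariables false

/-! ## Formulas of the modal μ-calculus -/

inductive Formula : Type
  | prop  : ℕ → Formula
  | nprop : ℕ → Formula
  | var   : ℕ → Formula
  | or    : Formula → Formula → Formula
  | and   : Formula → Formula → Formula
  | dia   : Formula → Formula
  | box   : Formula → Formula
  | mu    : ℕ → Formula → Formula
  | nu    : ℕ → Formula → Formula
  deriving DecidableEq

namespace Formula

/-- Free (formal) variables of a formula. -/
def freeVars : Formula → Finset ℕ
  | prop _ => ∅
  | nprop _ => ∅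
  | var x => {x}
  | or a b => a.freeVars ∪ b.freeVars
  | and a b => a.freeVars ∪ b.freeVars
  | dia a => a.freeVars
  | box a => a.freeVars
  | mu x a => a.freeVars.erase x
  | nu x a => a.freeVars.erase x

/-- A formula is closed if every formal variable is bound. -/
def Closed (φ : Formula) : Prop := φ.freeVars = ∅

/-- Substitution `φ[ψ/x]` (of a closed formula `ψ`, so capture is no issue). -/
def subst : Formula → ℕ → Formula → Formula
  | prop p, _, _ => prop p
  | nprop p, _, _ => nprop p
  | var y, x, ψ => if y = x then ψ else var y
  | or a b, x, ψ => or (a.subst x ψ) (b.subst x ψ)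
  | and a b, x, ψ => and (a.subst x ψ) (b.subst x ψ)
  | dia a, x, ψ => dia (a.subst x ψ)
  | box a, x, ψ => box (a.subst x ψ)
  | mu y a, x, ψ => if y = x then mu y a else mu y (a.subst x ψ)
  | nu y a, x, ψ => if y = x then nu y a else nu y (a.subst x ψ)

/-- The unfolding `φ[μx.φ]` of `μx.φ`. -/
def unfoldMu (x : ℕ) (φ : Formula) : Formula := φ.subst x (mu x φ)

/-- The unfolding `φ[νx.φ]` of `νx.φ`. -/
def unfoldNu (x : ℕ) (φ : Formula) : Formula := φ.subst x (nu x φ)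

/-- `η x. φ` where `η = ν` if `isNu` and `η = μ` otherwise. -/
def eta (isNu : Bool) (x : ℕ) (φ : Formula) : Formula := if isNu then nu x φ else mu x φ

/-- The unfolding `φ[ηx.φ]` of `ηx.φ`. -/
def unfoldEta (isNu : Bool) (x : ℕ) (φ : Formula) : Formula :=
  if isNu then unfoldNu x φ else unfoldMu x φ

/-- The negation (dual) of a formula. -/
def neg : Formula → Formula
  | prop p => nprop p
  | nprop p => prop p
  | var x => var x
  | or a b => and a.neg b.neg
  | and a b => or a.neg b.neg
  | dia a => box a.neg
  | box a => dia a.neg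
  | mu x a => nu x a.neg
  | nu x a => mu x a.neg

end Formula

/-! ## Kripke semantics -/

/-- A Kripke model (transition system with a valuation). -/
structure Kripke (W : Type) where
  rel : W → W → Prop
  val : ℕ → W → Prop

/-- Semantics of a formula in a Kripke model, under an assignment `env` of state
sets to the formal variables; `μ` and `ν` are interpreted as the least and
greatest fixpoints (given here by their Knaster–Tarski descriptions). -/
def sem {W : Type} (M : Kripke W) : Formula → (ℕ → Set W) → Set W
  | .prop p, _ => {w | M.val p w}
  | .nprop p, _ => {w | ¬ M.val p w}
  | .var x, env => env x
  | .or a b, env => sem M a env ∪ sem M b env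
  | .and a b, env => sem M a env ∩ sem M b env
  | .dia a, env => {w | ∃ v, M.rel w v ∧ v ∈ sem M a env}
  | .box a, env => {w | ∀ v, M.rel w v → v ∈ sem M a env}
  | .mu x a, env => ⋂₀ {S : Set W | sem M a (Function.update env x S) ⊆ S}
  | .nu x a, env => ⋃₀ {S : Set W | S ⊆ sem M a (Function.update env x S)}

/-- A sequent: a finite set of formulas (intended: closed formulas),
read disjunctively. -/
abbrev Sequent := Finset Formula

/-- All formulas of the sequent are closed. -/
def ClosedSeq (Γ : Sequent) : Prop := ∀ φ ∈ Γ, φ.Closed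

/-- A sequent is valid if its disjunction holds at every state of every Kripke model. -/
def ValidSeq (Γ : Sequent) : Prop :=
  ∀ (W : Type) (M : Kripke W) (env : ℕ → Set W) (w : W), ∃ φ ∈ Γ, w ∈ sem M φ env

/-! ## Closure, subsumption, adisjunctivity -/

/-- The trace step relation `φ ⤳ ψ`. -/
inductive TStep : Formula → Formula → Prop
  | orL (a b : Formula) : TStep (.or a b) a
  | orR (a b : Formula) : TStep (.or a b) b
  | andL (a b : Formula) : TStep (.and a b) a
  | andR (a b : Formula) : TStep (.and a b) b
  | dia (a : Formula) : TStep (.dia a) a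
  | box (a : Formula) : TStep (.box a) a
  | mu (x : ℕ) (a : Formula) : TStep (.mu x a) (Formula.unfoldMu x a)
  | nu (x : ℕ) (a : Formula) : TStep (.nu x a) (Formula.unfoldNu x a)

/-- The closure of a sequent: least superset closed under `⤳`. -/
def Clos (Γ : Sequent) : Set Formula :=
  {ψ | ∃ φ ∈ Γ, Relation.ReflTransGen TStep φ ψ}

/-- The subsumption order on formal variables (relative to an ambient sequent):
`x ≤ y` iff `x = y` or `x` occurs free in the (ηy.ψ)-formula binding `y`. -/
def VarLe (Γ : Sequent) (x y : ℕ) : Prop :=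
  x = y ∨ ∃ (b : Bool) (φ : Formula),
    Formula.eta b y φ ∈ Clos Γ ∧ x ∈ (Formula.eta b y φ).freeVars

/-- Adisjunctivity of a sequent. -/
def Adisjunctive (Γ : Sequent) : Prop :=
  ∀ (x : ℕ) (φ : Formula), Formula.nu x φ ∈ Clos Γ →
    ∀ ψ₀ ψ₁ : Formula, Formula.or ψ₀ ψ₁ ∈ Clos {Formula.nu x φ} →
      Formula.nu x φ ∉ Clos {ψ₀} ∨ Formula.nu x φ ∉ Clos {ψ₁}

/-! ## The proof system NW -/

/-- An instance of an NW rule (recording context and principal formula). -/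
inductive NWRule : Type
  | ax (p : ℕ)
  | orR (Γ : Sequent) (φ ψ : Formula)
  | andR (Γ : Sequent) (φ ψ : Formula)
  | weak (Γ : Sequent) (φ : Formula)
  | boxR (Γ : Sequent) (φ : Formula)
  | unfold (Γ : Sequent) (isNu : Bool) (x : ℕ) (φ : Formula)

namespace NWRule

/-- Conclusion of a rule instance. -/
def concl : NWRule → Sequent
  | .ax p => {.prop p, .nprop p}
  | .orR Γ φ ψ => insert (.or φ ψ) Γ
  | .andR Γ φ ψ => insert (.and φ ψ) Γ
  | .weak Γ φ => insert φ Γ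
  | .boxR Γ φ => insert (.box φ) (Γ.image Formula.dia)
  | .unfold Γ b x φ => insert (Formula.eta b x φ) Γ

/-- Premises of a rule instance. -/
def prems : NWRule → List Sequent
  | .ax _ => []
  | .orR Γ φ ψ => [insert φ (insert ψ Γ)]
  | .andR Γ φ ψ => [insert φ Γ, insert ψ Γ]
  | .weak Γ _ => [Γ]
  | .boxR Γ φ => [insert φ Γ]
  | .unfold Γ b x φ => [insert (Formula.unfoldEta b x φ) Γ]

/-- The descendant relation of a rule instance: `descends r i a b` holds if the
formula `b` in the `i`-th premise is a descendant of the formula `a` in the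
conclusion. -/
def descends : NWRule → ℕ → Formula → Formula → Prop
  | .ax _, _, _, _ => False
  | .orR Γ φ ψ, _, a, b => (a = .or φ ψ ∧ (b = φ ∨ b = ψ)) ∨ (a ∈ Γ ∧ b = a)
  | .andR Γ φ ψ, i, a, b => (a = .and φ ψ ∧ b = (if i = 0 then φ else ψ)) ∨ (a ∈ Γ ∧ b = a)
  | .weak Γ _, _, a, b => a ∈ Γ ∧ b = a
  | .boxR Γ φ, _, a, b => (a = .box φ ∧ b = φ) ∨ (∃ c ∈ Γ, a = .dia c ∧ b = c)
  | .unfold Γ isNu x φ, _, a, b =>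
      (a = Formula.eta isNu x φ ∧ b = Formula.unfoldEta isNu x φ) ∨ (a ∈ Γ ∧ b = a)

end NWRule

/-- An NW derivation of `Δ`: a (possibly infinite) tree of nodes (addressed by
lists of child indices) respecting the NW rules, all of whose leaves are axioms
(the only rules without premises are axioms). -/
structure NWDeriv (Δ : Sequent) where
  tree : Set (List ℕ)
  root_mem : [] ∈ tree
  prefix_closed : ∀ u n, u ++ [n] ∈ tree → u ∈ tree
  rule : List ℕ → NWRule
  label : List ℕ → Sequent
  label_root : label [] = Δ
  label_concl : ∀ u ∈ tree, label u = (rule u).concl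
  child_iff : ∀ u ∈ tree, ∀ n : ℕ, (u ++ [n] ∈ tree ↔ n < (rule u).prems.length)
  label_child : ∀ u ∈ tree, ∀ n : ℕ, ∀ h : n < (rule u).prems.length,
      label (u ++ [n]) = (rule u).prems.get ⟨n, h⟩

/-- The node at depth `n` on the branch described by the sequence `f` of child
indices. -/
def branchNode (f : ℕ → ℕ) (n : ℕ) : List ℕ := (List.range n).map f

namespace NWDeriv

variable {Δ : Sequent}

/-- `f` describes an infinite branch of the derivation. -/
def IsBranch (π : NWDeriv Δ) (f : ℕ → ℕ) : Prop := ∀ n, branchNode f n ∈ π.tree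

/-- `g` is a trace on the branch `f` starting at depth `k`. -/
def IsTraceOn (π : NWDeriv Δ) (f : ℕ → ℕ) (k : ℕ) (g : ℕ → Formula) : Prop :=
  ∀ n, g n ∈ π.label (branchNode f (k + n)) ∧
    (π.rule (branchNode f (k + n))).descends (f (k + n)) (g n) (g (n + 1))

end NWDeriv

/-- The set of formulas occurring infinitely often in the sequence `g`. -/
def InfOcc (g : ℕ → Formula) : Set Formula := {φ | ∀ N, ∃ n ≥ N, g n = φ}

/-- `g` is a ν-trace: the subsumption-minimal fixpoint formula occurring
infinitely often on it (equivalently, the fixpoint formula occurring infinitely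
often whose closure contains every formula occurring infinitely often) is a
ν-formula. -/
def IsNuTraceSeq (g : ℕ → Formula) : Prop :=
  ∃ (x : ℕ) (φ : Formula), Formula.nu x φ ∈ InfOcc g ∧
    ∀ ψ ∈ InfOcc g, ψ ∈ Clos {Formula.nu x φ}

/-- An NW derivation is a proof if every infinite branch carries a ν-trace. -/
def NWDeriv.IsProof {Δ : Sequent} (π : NWDeriv Δ) : Prop :=
  ∀ f : ℕ → ℕ, π.IsBranch f → ∃ k g, π.IsTraceOn f k g ∧ IsNuTraceSeq g

/-- Finite traces inside a derivation: `TraceRT π u φ v ψ` says there is a trace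
from the formula `φ` at node `u` to the formula `ψ` at node `v`. -/
inductive NWDeriv.TraceRT {Δ : Sequent} (π : NWDeriv Δ) :
    List ℕ → Formula → List ℕ → Formula → Prop
  | refl (u : List ℕ) (φ : Formula) : NWDeriv.TraceRT π u φ u φ
  | step {u : List ℕ} {φ : Formula} {v : List ℕ} {ψ : Formula} {n : ℕ} {χ : Formula} :
      NWDeriv.TraceRT π u φ v ψ → v ++ [n] ∈ π.tree →
      (π.rule v).descends n ψ χ → NWDeriv.TraceRT π u φ (v ++ [n]) χ

/-! ## The concrete sequent Φ -/

/-- The propositional letter `p`. -/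
def pP : Formula := .prop 0
/-- The negated letter `p̄`. -/
def pN : Formula := .nprop 0
/-- `νy.□(p ∧ (□x ∨ ◇y))`, with `x` (variable 0) free. -/
def psiIn : Formula := .nu 1 (.box (.and pP (.or (.box (.var 0)) (.dia (.var 1)))))
/-- `◇(p̄ ∧ (□x ∨ ◇νy.□(p ∧ (□x ∨ ◇y))))`, the body of `νx.φ`. -/
def phiBody : Formula := .dia (.and pN (.or (.box (.var 0)) (.dia psiIn)))
/-- `νx.φ = νx.◇(p̄ ∧ (□x ∨ ◇νy.□(p ∧ (□x ∨ ◇y))))`. -/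
def nuX : Formula := .nu 0 phiBody
/-- `νy.ψ = νy.□(p ∧ (□νx.φ ∨ ◇y))`. -/
def nuY : Formula := psiIn.subst 0 nuX
/-- `□(p ∧ (□νx.φ ∨ ◇y))`, the body of `νy.ψ`. -/
def psiBody : Formula := .box (.and pP (.or (.box nuX) (.dia (.var 1))))
/-- The sequent `Φ = {νx.φ, νy.ψ}`. -/
def PhiSeq : Sequent := {nuX, nuY}
/-- `χ = □νx.φ ∨ ◇νy.ψ`. -/
def chi : Formula := .or (.box nuX) (.dia nuY)
/-- The unfolding `φ[νx.φ]`. -/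
def unfX : Formula := Formula.unfoldNu 0 phiBody
/-- The unfolding `ψ[νy.ψ]`. -/
def unfY : Formula := Formula.unfoldNu 1 psiBody

/-! ## Unfolding trees for NW proofs of Φ -/

namespace NWDeriv

/-- An unfolding node: a node labelled by the sequent Φ. -/
def UnfNode (π : NWDeriv PhiSeq) (u : List ℕ) : Prop := u ∈ π.tree ∧ π.label u = PhiSeq

/-- `v` is a child of `u` in the unfolding tree `T_π`. -/
def TChild (π : NWDeriv PhiSeq) (u v : List ℕ) : Prop :=
  π.UnfNode u ∧ π.UnfNode v ∧ u <+: v ∧ u ≠ v ∧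
    ∀ w, u <+: w → w <+: v → w ≠ u → w ≠ v → ¬ π.UnfNode w

/-- `v` is an x-node (child of `u` in `T_π`): no trace from `νy.ψ` at `u` to
`νx.φ` or `νy.ψ` at `v`. -/
def IsXNode (π : NWDeriv PhiSeq) (u v : List ℕ) : Prop :=
  π.TChild u v ∧ ¬ (π.TraceRT u nuY v nuX ∨ π.TraceRT u nuY v nuY)

/-- `v` is a y-node (child of `u` in `T_π`): no trace from `νx.φ` at `u` to
`νx.φ` or `νy.ψ` at `v`. -/
def IsYNode (π : NWDeriv PhiSeq) (u v : List ℕ) : Prop :=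
  π.TChild u v ∧ ¬ (π.TraceRT u nuX v nuX ∨ π.TraceRT u nuX v nuY)

end NWDeriv

/-! ## The annotated proof system Clo (optionally with cut) -/

/-- Names: `(x, i)` is the `i`-th name for the formal variable `x`. -/
abbrev Name := ℕ × ℕ
/-- Annotations: finite words of names. -/
abbrev Ann := List Name
/-- Annotated formulas `φ^a`. -/
abbrev AFormula := Formula × Ann
/-- Annotated sequents. -/
abbrev ASequent := Finset AFormula

/-- Erase the annotations of an annotated sequent. -/
def stripSeq (Δ : ASequent) : Sequent := Δ.image Prod.fst

/-- Equip each formula of a plain sequent with the empty annotation. -/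
def annSeq (Γ : Sequent) : ASequent := Γ.image (fun φ => (φ, ([] : Ann)))

/-- `a ≤ x`: every name in the annotation `a` is a name of a variable `≤ x`
in the subsumption order (relative to the ambient sequent `Γ₀`). -/
def AnnLe (Γ₀ : Sequent) (a : Ann) (x : ℕ) : Prop := ∀ m ∈ a, VarLe Γ₀ m.1 x

/-- The name `x'` does not appear in the annotated sequent `Δ`. -/
def NameFresh (x' : Name) (Δ : ASequent) : Prop := ∀ φa ∈ Δ, x' ∉ φa.2

/-- An instance of a rule of Clo (with cut), including the bookkeeping
constructor `asm` for discharged assumptions. -/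
inductive CloRule : Type
  | ax (p : ℕ)
  | orR (Γ : ASequent) (φ ψ : Formula) (a : Ann)
  | andR (Γ : ASequent) (φ ψ : Formula) (a : Ann)
  | weak (Γ : ASequent) (φ : Formula) (a : Ann)
  | boxR (Γ : ASequent) (φ : Formula) (a : Ann)
  | unfold (Γ : ASequent) (isNu : Bool) (x : ℕ) (φ : Formula) (a : Ann)
  | exp (l : List (Formula × Ann × Ann))
  | clo (Γ : ASequent) (x : ℕ) (φ : Formula) (a : Ann) (x' : Name)
  | asm (Γ : ASequent) (x : ℕ) (φ : Formula) (a : Ann) (x' : Name)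
  | cut (Γ : ASequent) (A : Formula)

namespace CloRule

/-- Conclusion of a rule instance. -/
def concl : CloRule → ASequent
  | .ax p => {(.prop p, []), (.nprop p, [])}
  | .orR Γ φ ψ a => insert (.or φ ψ, a) Γ
  | .andR Γ φ ψ a => insert (.and φ ψ, a) Γ
  | .weak Γ φ a => insert (φ, a) Γ
  | .boxR Γ φ a => insert (.box φ, a) (Γ.image (fun q => (Formula.dia q.1, q.2)))
  | .unfold Γ b x φ a => insert (Formula.eta b x φ, a) Γ
  | .exp l => (l.map (fun t => (t.1, t.2.2))).toFinset
  | .clo Γ x φ a _ => insert (.nu x φ, a) Γ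
  | .asm Γ x φ a x' => insert (.nu x φ, a ++ [x']) Γ
  | .cut Γ _ => Γ

/-- Premises of a rule instance (a discharged assumption is a leaf). -/
def prems : CloRule → List ASequent
  | .ax _ => []
  | .orR Γ φ ψ a => [insert (φ, a) (insert (ψ, a) Γ)]
  | .andR Γ φ ψ a => [insert (φ, a) Γ, insert (ψ, a) Γ]
  | .weak Γ _ _ => [Γ]
  | .boxR Γ φ a => [insert (φ, a) Γ]
  | .unfold Γ b x φ a => [insert (Formula.unfoldEta b x φ, a) Γ]
  | .exp l => [(l.map (fun t => (t.1, t.2.1))).toFinset]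
  | .clo Γ x φ a x' => [insert (Formula.unfoldNu x φ, a ++ [x']) Γ]
  | .asm _ _ _ _ _ => []
  | .cut Γ A => [insert (A, []) Γ, insert (A.neg, []) Γ]

/-- Side conditions of the rules, relative to the ambient plain sequent `Γ₀`
(used for the subsumption order). -/
def Ok (Γ₀ : Sequent) : CloRule → Prop
  | .unfold _ _ x _ a => AnnLe Γ₀ a x
  | .exp l => ∀ t ∈ l, List.Sublist t.2.1 t.2.2
  | .clo Γ x _ a x' => x'.1 = x ∧ AnnLe Γ₀ a x ∧ NameFresh x' Γ
  | .asm _ x _ _ x' => x'.1 = x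
  | .cut _ A => A.Closed
  | _ => True

/-- Is this rule an instance of exp? -/
def IsExp : CloRule → Prop
  | .exp _ => True
  | _ => False

/-- Is this rule a discharged assumption? -/
def IsAsm : CloRule → Prop
  | .asm _ _ _ _ _ => True
  | _ => False

/-- Is this rule a cut? -/
def IsCut : CloRule → Prop
  | .cut _ _ => True
  | _ => False

/-- The discharge token of a clo rule. -/
def cloToken : CloRule → Option Name
  | .clo _ _ _ _ x' => some x'
  | _ => none

/-- The descendant relation of a rule instance, on plain formulas. -/
def descends : CloRule → ℕ → Formula → Formula → Prop
  | .ax _, _, _, _ => False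
  | .orR Γ φ ψ _, _, c, d => (c = .or φ ψ ∧ (d = φ ∨ d = ψ)) ∨ ((∃ e ∈ Γ, c = e.1) ∧ d = c)
  | .andR Γ φ ψ _, i, c, d =>
      (c = .and φ ψ ∧ d = (if i = 0 then φ else ψ)) ∨ ((∃ e ∈ Γ, c = e.1) ∧ d = c)
  | .weak Γ _ _, _, c, d => (∃ e ∈ Γ, c = e.1) ∧ d = c
  | .boxR Γ φ _, _, c, d => (c = .box φ ∧ d = φ) ∨ (∃ e ∈ Γ, c = .dia e.1 ∧ d = e.1)
  | .unfold Γ b x φ _, _, c, d =>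
      (c = Formula.eta b x φ ∧ d = Formula.unfoldEta b x φ) ∨ ((∃ e ∈ Γ, c = e.1) ∧ d = c)
  | .exp l, _, c, d => (∃ t ∈ l, c = t.1) ∧ d = c
  | .clo Γ x φ _ _, _, c, d =>
      (c = .nu x φ ∧ d = Formula.unfoldNu x φ) ∨ ((∃ e ∈ Γ, c = e.1) ∧ d = c)
  | .asm _ _ _ _ _, _, _, _ => False
  | .cut Γ _, _, c, d => (∃ e ∈ Γ, c = e.1) ∧ d = c

end CloRule

/-- A Clo derivation of the annotated sequent `Δ₀` (a possibly infinite tree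
respecting the rules of Clo, whose leaves are axioms or discharged
assumptions).  If `cut = false` the cut rule is not allowed. -/
structure CloDeriv (cut : Bool) (Δ₀ : ASequent) where
  tree : Set (List ℕ)
  root_mem : [] ∈ tree
  prefix_closed : ∀ u n, u ++ [n] ∈ tree → u ∈ tree
  rule : List ℕ → CloRule
  label : List ℕ → ASequent
  label_root : label [] = Δ₀
  label_concl : ∀ u ∈ tree, label u = (rule u).concl
  child_iff : ∀ u ∈ tree, ∀ n : ℕ, (u ++ [n] ∈ tree ↔ n < (rule u).prems.length)
  label_child : ∀ u ∈ tree, ∀ n : ℕ, ∀ h : n < (rule u).prems.length,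
      label (u ++ [n]) = (rule u).prems.get ⟨n, h⟩
  ok : ∀ u ∈ tree, (rule u).Ok (stripSeq Δ₀)
  cut_ok : ∀ u ∈ tree, (rule u).IsCut → cut = true
  token_unique : ∀ u ∈ tree, ∀ v ∈ tree, ∀ x' : Name,
      (rule u).cloToken = some x' → (rule v).cloToken = some x' → u = v
  discharged : ∀ u ∈ tree, ∀ (Γ : ASequent) (x : ℕ) (φ : Formula) (a : Ann) (x' : Name),
      rule u = .asm Γ x φ a x' →
      ∃ v, v <+: u ∧ v ≠ u ∧ v ∈ tree ∧ rule v = .clo Γ x φ a x'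

namespace CloDeriv

variable {c : Bool} {Δ₀ : ASequent}

/-- Finite traces (of plain formulas) inside a Clo derivation. -/
inductive TraceRT (ρ : CloDeriv c Δ₀) : List ℕ → Formula → List ℕ → Formula → Prop
  | refl (u : List ℕ) (φ : Formula) : TraceRT ρ u φ u φ
  | step {u : List ℕ} {φ : Formula} {v : List ℕ} {ψ : Formula} {n : ℕ} {χ : Formula} :
      TraceRT ρ u φ v ψ → v ++ [n] ∈ ρ.tree →
      (ρ.rule v).descends n ψ χ → TraceRT ρ u φ (v ++ [n]) χ

end CloDeriv

/-- A Clo derivation of the plain sequent `Φ` (all annotations at the root empty). -/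
abbrev CloDerivPhi := CloDeriv false (annSeq PhiSeq)

namespace CloDeriv

/-- Unfolding node of a Clo derivation of Φ: labelled by (an annotated version
of) the sequent Φ and not by the rule exp. -/
def UnfNode (ρ : CloDerivPhi) (u : List ℕ) : Prop :=
  u ∈ ρ.tree ∧ stripSeq (ρ.label u) = PhiSeq ∧ ¬ (ρ.rule u).IsExp

/-- `v` is a child of `u` in the unfolding tree `T_ρ`. -/
def TChild (ρ : CloDerivPhi) (u v : List ℕ) : Prop :=
  ρ.UnfNode u ∧ ρ.UnfNode v ∧ u <+: v ∧ u ≠ v ∧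
    ∀ w, u <+: w → w <+: v → w ≠ u → w ≠ v → ¬ ρ.UnfNode w

/-- `v` is an x-node (child of `u` in `T_ρ`). -/
def IsXNode (ρ : CloDerivPhi) (u v : List ℕ) : Prop :=
  ρ.TChild u v ∧ ¬ (ρ.TraceRT u nuY v nuX ∨ ρ.TraceRT u nuY v nuY)

/-- `v` is a y-node (child of `u` in `T_ρ`). -/
def IsYNode (ρ : CloDerivPhi) (u v : List ℕ) : Prop :=
  ρ.TChild u v ∧ ¬ (ρ.TraceRT u nuX v nuX ∨ ρ.TraceRT u nuX v nuY)

/-- A root-like unfolding node: no node in the subtree rooted at `u` is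
discharged by a clo rule applied at a proper ancestor of `u`. -/
def RootLike (ρ : CloDerivPhi) (u : List ℕ) : Prop :=
  ρ.UnfNode u ∧ ∀ w ∈ ρ.tree, u <+: w →
    ∀ (Γ : ASequent) (x : ℕ) (φ : Formula) (a : Ann) (x' : Name),
      ρ.rule w = .asm Γ x φ a x' →
      ∀ v ∈ ρ.tree, (ρ.rule v).cloToken = some x' → ¬ (v <+: u ∧ v ≠ u)

end CloDeriv

/-! ## Obtaining Clo derivations from NW proofs -/

/-- Erasing annotations from a Clo rule instance gives an NW rule instance
(clo becomes a ν-unfolding); exp and discharged assumptions are erased. -/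
def CloRule.strip : CloRule → Option NWRule
  | .ax p => some (.ax p)
  | .orR Γ φ ψ _ => some (.orR (stripSeq Γ) φ ψ)
  | .andR Γ φ ψ _ => some (.andR (stripSeq Γ) φ ψ)
  | .weak Γ φ _ => some (.weak (stripSeq Γ) φ)
  | .boxR Γ φ _ => some (.boxR (stripSeq Γ) φ)
  | .unfold Γ b x φ _ => some (.unfold (stripSeq Γ) b x φ)
  | .exp _ => none
  | .clo Γ x φ _ _ => some (.unfold (stripSeq Γ) true x φ)
  | .asm _ _ _ _ _ => none
  | .cut _ _ => none

/-- `ρ` is obtained from the NW proof `π` by changing some ν-unfoldings into clo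
rules with discharged assumptions (pruning the tree there) and adding
annotations and exp rules: witnessed by a structure-preserving map `e` from the
nodes of `ρ` to the nodes of `π` that collapses the inserted exp nodes, matches
the labels up to annotations, and matches the rules up to annotations (with clo
read as ν-unfolding). -/
def Obtains {Γ : Sequent} (π : NWDeriv Γ) (ρ : CloDeriv false (annSeq Γ)) : Prop :=
  ∃ e : List ℕ → List ℕ,
    e [] = [] ∧
    (∀ u ∈ ρ.tree, e u ∈ π.tree) ∧
    (∀ u ∈ ρ.tree, stripSeq (ρ.label u) = π.label (e u)) ∧
    (∀ u ∈ ρ.tree, (ρ.rule u).IsExp → e (u ++ [0]) = e u) ∧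
    (∀ u ∈ ρ.tree, ¬ (ρ.rule u).IsExp → ∀ n : ℕ, u ++ [n] ∈ ρ.tree →
        e (u ++ [n]) = e u ++ [n]) ∧
    (∀ u ∈ ρ.tree, ∀ r : NWRule, (ρ.rule u).strip = some r → π.rule (e u) = r)

/-! ## The infinite unfolding of a Clo proof -/

/-- `Resolves u w`: in the infinite unfolding with exp nodes removed, the node
`u` of the original Clo derivation is represented by the node `w`, obtained by
skipping exp rules and replacing discharged assumptions by their companions. -/
inductive CloDeriv.Resolves {c : Bool} {Δ₀ : ASequent} (ρ : CloDeriv c Δ₀) :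
    List ℕ → List ℕ → Prop
  | base {u : List ℕ} : u ∈ ρ.tree → ¬ (ρ.rule u).IsExp → ¬ (ρ.rule u).IsAsm →
      CloDeriv.Resolves ρ u u
  | exp {u w : List ℕ} : u ∈ ρ.tree → (ρ.rule u).IsExp →
      CloDeriv.Resolves ρ (u ++ [0]) w → CloDeriv.Resolves ρ u w
  | asm {u v w : List ℕ} {Γ : ASequent} {x : ℕ} {φ : Formula} {a : Ann} {x' : Name} :
      u ∈ ρ.tree → ρ.rule u = .asm Γ x φ a x' →
      v ∈ ρ.tree → (ρ.rule v).cloToken = some x' →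
      CloDeriv.Resolves ρ v w → CloDeriv.Resolves ρ u w

/-- `π` is the NW derivation obtained from the infinite unfolding of the Clo
derivation `ρ` by replacing clo rules by ν-unfoldings, removing exp nodes and
erasing all annotations: witnessed by a map `f` sending each node of `π` to the
node of `ρ` it comes from, commuting with the resolution of exp nodes and of
discharged assumptions by their companions. -/
def IsUnfoldedStrip {Γ : Sequent} (ρ : CloDeriv false (annSeq Γ)) (π : NWDeriv Γ) : Prop :=
  ∃ f : List ℕ → List ℕ,
    ρ.Resolves [] (f []) ∧
    (∀ u ∈ π.tree, f u ∈ ρ.tree) ∧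
    (∀ u ∈ π.tree, stripSeq (ρ.label (f u)) = π.label u) ∧
    (∀ u ∈ π.tree, (ρ.rule (f u)).strip = some (π.rule u)) ∧
    (∀ u ∈ π.tree, ∀ n : ℕ, u ++ [n] ∈ π.tree → ρ.Resolves (f u ++ [n]) (f (u ++ [n])))


set_option maxHeartbeats 1000000
namespace CloSoundAux

open Formula

lemma mem_freeVars_subst {φ ψ : Formula} {x y : ℕ}
    (h : y ∈ (φ.subst x ψ).freeVars) : (y ∈ φ.freeVars ∧ y ≠ x) ∨ y ∈ ψ.freeVars := by
  induction φ with
  | prop p => simp [subst, freeVars] at h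
  | nprop p => simp [subst, freeVars] at h
  | var z =>
    by_cases hz : z = x
    · simp [subst, hz] at h; exact Or.inr h
    · simp [subst, hz, freeVars] at h; subst h; exact Or.inl ⟨by simp [freeVars], hz⟩
  | or a b iha ihb =>
    simp only [subst, freeVars, Finset.mem_union] at h ⊢
    rcases h with h | h
    · rcases iha h with ⟨h1, h2⟩ | h1
      · exact Or.inl ⟨Or.inl h1, h2⟩
      · exact Or.inr h1
    · rcases ihb h with ⟨h1, h2⟩ | h1
      · exact Or.inl ⟨Or.inr h1, h2⟩
      · exact Or.inr h1
  | and a b iha ihb =>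
    simp only [subst, freeVars, Finset.mem_union] at h ⊢
    rcases h with h | h
    · rcases iha h with ⟨h1, h2⟩ | h1
      · exact Or.inl ⟨Or.inl h1, h2⟩
      · exact Or.inr h1
    · rcases ihb h with ⟨h1, h2⟩ | h1
      · exact Or.inl ⟨Or.inr h1, h2⟩
      · exact Or.inr h1
  | dia a iha => simp only [subst, freeVars] at h ⊢; exact iha h
  | box a iha => simp only [subst, freeVars] at h ⊢; exact iha h
  | mu z a iha =>
    by_cases hz : z = x
    · subst hz
      simp only [subst, if_pos rfl, ↓reduceIte] at h
      simp only [freeVars, Finset.mem_erase] at h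
      exact Or.inl ⟨by simp [freeVars, Finset.mem_erase]; exact ⟨h.1, h.2⟩, h.1⟩
    · simp only [subst, hz, if_neg hz, ↓reduceIte, freeVars, Finset.mem_erase] at h
      rcases h with ⟨hyz, h⟩
      rcases iha h with ⟨h1, h2⟩ | h1
      · exact Or.inl ⟨by simp [freeVars, Finset.mem_erase]; exact ⟨hyz, h1⟩, h2⟩
      · exact Or.inr h1
  | nu z a iha =>
    by_cases hz : z = x
    · subst hz
      simp only [subst, if_pos rfl, ↓reduceIte] at h
      simp only [freeVars, Finset.mem_erase] at h
      exact Or.inl ⟨by simp [freeVars, Finset.mem_erase]; exact ⟨h.1, h.2⟩, h.1⟩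
    · simp only [subst, hz, if_neg hz, ↓reduceIte, freeVars, Finset.mem_erase] at h
      rcases h with ⟨hyz, h⟩
      rcases iha h with ⟨h1, h2⟩ | h1
      · exact Or.inl ⟨by simp [freeVars, Finset.mem_erase]; exact ⟨hyz, h1⟩, h2⟩
      · exact Or.inr h1

lemma closed_subst {φ ψ : Formula} {x : ℕ}
    (hφ : φ.freeVars ⊆ {x}) (hψ : ψ.Closed) : (φ.subst x ψ).Closed := by
  rw [Closed, Finset.eq_empty_iff_forall_notMem]
  intro y hy
  rcases mem_freeVars_subst hy with ⟨h1, h2⟩ | h1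
  · exact h2 (Finset.mem_singleton.1 (hφ h1))
  · rw [Closed, Finset.eq_empty_iff_forall_notMem] at hψ; exact hψ y h1

lemma nu_closed_body {x : ℕ} {φ : Formula} (h : (Formula.nu x φ).Closed) :
    φ.freeVars ⊆ {x} := by
  intro y hy
  rw [Closed, freeVars, Finset.eq_empty_iff_forall_notMem] at h
  by_contra hne
  exact h y (Finset.mem_erase.2 ⟨by simpa using hne, hy⟩)

lemma mu_closed_body {x : ℕ} {φ : Formula} (h : (Formula.mu x φ).Closed) :
    φ.freeVars ⊆ {x} := by
  intro y hy
  rw [Closed, freeVars, Finset.eq_empty_iff_forall_notMem] at h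
  by_contra hne
  exact h y (Finset.mem_erase.2 ⟨by simpa using hne, hy⟩)

end CloSoundAux


namespace CloSoundAux

open Formula

variable {W : Type}

def semO (M : Kripke W) (σ : Formula → Option (Set W)) : Formula → (ℕ → Set W) → Set W
  | .prop p, _ => (σ (.prop p)).getD {w | M.val p w}
  | .nprop p, _ => (σ (.nprop p)).getD {w | ¬ M.val p w}
  | .var x, env => (σ (.var x)).getD (env x)
  | .or a b, env => (σ (.or a b)).getD (semO M σ a env ∪ semO M σ b env)
  | .and a b, env => (σ (.and a b)).getD (semO M σ a env ∩ semO M σ b env)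
  | .dia a, env => (σ (.dia a)).getD {w | ∃ v, M.rel w v ∧ v ∈ semO M σ a env}
  | .box a, env => (σ (.box a)).getD {w | ∀ v, M.rel w v → v ∈ semO M σ a env}
  | .mu x a, env => (σ (.mu x a)).getD
      (⋂₀ {S : Set W | semO M σ a (Function.update env x S) ⊆ S})
  | .nu x a, env => (σ (.nu x a)).getD
      (⋃₀ {S : Set W | S ⊆ semO M σ a (Function.update env x S)})

lemma semO_some {M : Kripke W} {σ : Formula → Option (Set W)} {ψ : Formula} {S : Set W}
    (h : σ ψ = some S) (env : ℕ → Set W) : semO M σ ψ env = S := by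
  cases ψ <;> simp [semO, h]

/-- If `σ` is trivial, `semO` is `sem`. -/
lemma semO_none {M : Kripke W} {σ : Formula → Option (Set W)}
    (h : ∀ ψ, σ ψ = none) : ∀ (φ : Formula) (env : ℕ → Set W), semO M σ φ env = sem M φ env := by
  intro φ
  induction φ with
  | prop p => intro env; simp [semO, sem, h]
  | nprop p => intro env; simp [semO, sem, h]
  | var x => intro env; simp [semO, sem, h]
  | or a b iha ihb => intro env; simp [semO, sem, h, iha, ihb]
  | and a b iha ihb => intro env; simp [semO, sem, h, iha, ihb]
  | dia a iha => intro env; simp [semO, sem, h, iha]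
  | box a iha => intro env; simp [semO, sem, h, iha]
  | mu x a iha => intro env; simp [semO, sem, h, iha]
  | nu x a iha => intro env; simp [semO, sem, h, iha]

/-- Master monotonicity lemma for `semO`. -/
lemma semO_le {M : Kripke W} {σ σ' : Formula → Option (Set W)}
    (h1 : ∀ ψ S S', σ ψ = some S → σ' ψ = some S' → S ⊆ S')
    (h2 : ∀ ψ S', σ ψ = none → σ' ψ = some S' → ∀ env, semO M σ ψ env ⊆ S')
    (h3 : ∀ ψ S, σ ψ = some S → σ' ψ = none → ∀ env, S ⊆ semO M σ' ψ env) :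
    ∀ (φ : Formula) ⦃env env' : ℕ → Set W⦄, (∀ y, env y ⊆ env' y) →
      semO M σ φ env ⊆ semO M σ' φ env' := by
  intro φ
  induction φ with
  | prop p =>
    intro env env' henv
    rcases hs : σ (.prop p) with _ | S <;> rcases hs' : σ' (.prop p) with _ | S'
    · simp [semO, hs, hs']
    · rw [show semO M σ' (.prop p) env' = S' from semO_some hs' env']
      exact h2 _ _ hs hs' env
    · rw [show semO M σ (.prop p) env = S from semO_some hs env]
      exact h3 _ _ hs hs' env'
    · rw [semO_some hs env, semO_some hs' env']; exact h1 _ _ _ hs hs'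
  | nprop p =>
    intro env env' henv
    rcases hs : σ (.nprop p) with _ | S <;> rcases hs' : σ' (.nprop p) with _ | S'
    · simp [semO, hs, hs']
    · rw [semO_some hs' env']; exact h2 _ _ hs hs' env
    · rw [semO_some hs env]; exact h3 _ _ hs hs' env'
    · rw [semO_some hs env, semO_some hs' env']; exact h1 _ _ _ hs hs'
  | var x =>
    intro env env' henv
    rcases hs : σ (.var x) with _ | S <;> rcases hs' : σ' (.var x) with _ | S'
    · simpa [semO, hs, hs'] using henv x
    · rw [semO_some hs' env']; exact h2 _ _ hs hs' env
    · rw [semO_some hs env]; exact h3 _ _ hs hs' env'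
    · rw [semO_some hs env, semO_some hs' env']; exact h1 _ _ _ hs hs'
  | or a b iha ihb =>
    intro env env' henv
    rcases hs : σ (.or a b) with _ | S <;> rcases hs' : σ' (.or a b) with _ | S'
    · simp only [semO, hs, hs', Option.getD_none]
      exact Set.union_subset_union (iha henv) (ihb henv)
    · rw [semO_some hs' env']; exact h2 _ _ hs hs' env
    · rw [semO_some hs env]; exact h3 _ _ hs hs' env'
    · rw [semO_some hs env, semO_some hs' env']; exact h1 _ _ _ hs hs'
  | and a b iha ihb =>
    intro env env' henv
    rcases hs : σ (.and a b) with _ | S <;> rcases hs' : σ' (.and a b) with _ | S'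
    · simp only [semO, hs, hs', Option.getD_none]
      exact Set.inter_subset_inter (iha henv) (ihb henv)
    · rw [semO_some hs' env']; exact h2 _ _ hs hs' env
    · rw [semO_some hs env]; exact h3 _ _ hs hs' env'
    · rw [semO_some hs env, semO_some hs' env']; exact h1 _ _ _ hs hs'
  | dia a iha =>
    intro env env' henv
    rcases hs : σ (.dia a) with _ | S <;> rcases hs' : σ' (.dia a) with _ | S'
    · simp only [semO, hs, hs', Option.getD_none]
      intro w hw
      rcases hw with ⟨v, hv1, hv2⟩
      exact ⟨v, hv1, iha henv hv2⟩
    · rw [semO_some hs' env']; exact h2 _ _ hs hs' env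
    · rw [semO_some hs env]; exact h3 _ _ hs hs' env'
    · rw [semO_some hs env, semO_some hs' env']; exact h1 _ _ _ hs hs'
  | box a iha =>
    intro env env' henv
    rcases hs : σ (.box a) with _ | S <;> rcases hs' : σ' (.box a) with _ | S'
    · simp only [semO, hs, hs', Option.getD_none]
      intro w hw v hv
      exact iha henv (hw v hv)
    · rw [semO_some hs' env']; exact h2 _ _ hs hs' env
    · rw [semO_some hs env]; exact h3 _ _ hs hs' env'
    · rw [semO_some hs env, semO_some hs' env']; exact h1 _ _ _ hs hs'
  | mu x a iha =>
    intro env env' henv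
    rcases hs : σ (.mu x a) with _ | S <;> rcases hs' : σ' (.mu x a) with _ | S'
    · simp only [semO, hs, hs', Option.getD_none]
      intro w hw
      intro S hS
      refine hw S ?_
      refine subset_trans (iha ?_) hS
      intro y
      by_cases hy : y = x
      · subst hy; simp [Function.update_self]
      · simp [Function.update_of_ne hy]; exact henv y
    · rw [semO_some hs' env']; exact h2 _ _ hs hs' env
    · rw [semO_some hs env]; exact h3 _ _ hs hs' env'
    · rw [semO_some hs env, semO_some hs' env']; exact h1 _ _ _ hs hs'
  | nu x a iha =>
    intro env env' henv
    rcases hs : σ (.nu x a) with _ | S <;> rcases hs' : σ' (.nu x a) with _ | S'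
    · simp only [semO, hs, hs', Option.getD_none]
      intro w hw
      rcases hw with ⟨S, hS, hwS⟩
      refine ⟨S, ?_, hwS⟩
      refine subset_trans hS (iha ?_)
      intro y
      by_cases hy : y = x
      · subst hy; simp [Function.update_self]
      · simp [Function.update_of_ne hy]; exact henv y
    · rw [semO_some hs' env']; exact h2 _ _ hs hs' env
    · rw [semO_some hs env]; exact h3 _ _ hs hs' env'
    · rw [semO_some hs env, semO_some hs' env']; exact h1 _ _ _ hs hs'

/-- Environment agreement on free variables. -/
lemma semO_agree {M : Kripke W} {σ : Formula → Option (Set W)} :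
    ∀ (φ : Formula) ⦃env env' : ℕ → Set W⦄, (∀ y ∈ φ.freeVars, env y = env' y) →
      semO M σ φ env = semO M σ φ env' := by
  intro φ
  induction φ with
  | prop p => intro env env' h; rfl
  | nprop p => intro env env' h; rfl
  | var x =>
    intro env env' h
    simp only [semO]
    rw [h x (by simp [freeVars])]
  | or a b iha ihb =>
    intro env env' h
    simp only [semO]
    rw [iha (fun y hy => h y (by simp [freeVars, hy])),
        ihb (fun y hy => h y (by simp [freeVars, hy]))]
  | and a b iha ihb =>
    intro env env' h
    simp only [semO]
    rw [iha (fun y hy => h y (by simp [freeVars, hy])),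
        ihb (fun y hy => h y (by simp [freeVars, hy]))]
  | dia a iha =>
    intro env env' h
    simp only [semO]
    rw [iha (fun y hy => h y (by simp [freeVars, hy]))]
  | box a iha =>
    intro env env' h
    simp only [semO]
    rw [iha (fun y hy => h y (by simp [freeVars, hy]))]
  | mu x a iha =>
    intro env env' h
    simp only [semO]
    have : ∀ S : Set W, semO M σ a (Function.update env x S)
        = semO M σ a (Function.update env' x S) := by
      intro S
      refine iha ?_
      intro y hy
      by_cases hyx : y = x
      · subst hyx; simp [Function.update_self]
      · simp only [Function.update_of_ne hyx]
        exact h y (by simp [freeVars, Finset.mem_erase, hyx, hy])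
    congr 1
    ext S
    simp [this]
  | nu x a iha =>
    intro env env' h
    simp only [semO]
    have : ∀ S : Set W, semO M σ a (Function.update env x S)
        = semO M σ a (Function.update env' x S) := by
      intro S
      refine iha ?_
      intro y hy
      by_cases hyx : y = x
      · subst hyx; simp [Function.update_self]
      · simp only [Function.update_of_ne hyx]
        exact h y (by simp [freeVars, Finset.mem_erase, hyx, hy])
    congr 1
    ext S
    simp [this]

lemma semO_closed {M : Kripke W} {σ : Formula → Option (Set W)} {φ : Formula}
    (hφ : φ.Closed) (env env' : ℕ → Set W) : semO M σ φ env = semO M σ φ env' :=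
  semO_agree φ (by intro y hy; rw [Closed] at hφ; simp [hφ] at hy)

end CloSoundAux


namespace CloSoundAux

open Formula

variable {W : Type}

lemma subst_of_not_free {φ ψ : Formula} {x : ℕ} (h : x ∉ φ.freeVars) :
    φ.subst x ψ = φ := by
  induction φ with
  | prop p => rfl
  | nprop p => rfl
  | var y =>
    have : y ≠ x := by simp [freeVars] at h; exact fun e => h e.symm
    simp [subst, this]
  | or a b iha ihb =>
    simp only [freeVars, Finset.mem_union, not_or] at h
    simp [subst, iha h.1, ihb h.2]
  | and a b iha ihb =>
    simp only [freeVars, Finset.mem_union, not_or] at h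
    simp [subst, iha h.1, ihb h.2]
  | dia a iha => simp only [freeVars] at h; simp [subst, iha h]
  | box a iha => simp only [freeVars] at h; simp [subst, iha h]
  | mu y a iha =>
    by_cases hy : y = x
    · simp [subst, hy]
    · simp only [freeVars, Finset.mem_erase] at h
      push_neg at h
      simp [subst, hy, iha (h (fun e => hy e.symm))]
  | nu y a iha =>
    by_cases hy : y = x
    · simp [subst, hy]
    · simp only [freeVars, Finset.mem_erase] at h
      push_neg at h
      simp [subst, hy, iha (h (fun e => hy e.symm))]

/-! ### fixpoint helpers -/

def nuSet (F : Set W → Set W) : Set W := ⋃₀ {S | S ⊆ F S}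
def muSet (F : Set W → Set W) : Set W := ⋂₀ {S | F S ⊆ S}

lemma le_nuSet {F : Set W → Set W} {T : Set W} (h : T ⊆ F T) : T ⊆ nuSet F :=
  fun w hw => ⟨T, h, hw⟩

lemma nuSet_le_map {F : Set W → Set W} (hm : ∀ ⦃A B : Set W⦄, A ⊆ B → F A ⊆ F B) :
    nuSet F ⊆ F (nuSet F) := by
  intro w hw
  rcases hw with ⟨S, hS, hwS⟩
  exact hm (le_nuSet hS) (hS hwS)

lemma map_le_nuSet {F : Set W → Set W} (hm : ∀ ⦃A B : Set W⦄, A ⊆ B → F A ⊆ F B) :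
    F (nuSet F) ⊆ nuSet F := by
  refine le_nuSet (hm (nuSet_le_map hm))

lemma nuSet_mono {F G : Set W → Set W} (h : ∀ T, F T ⊆ G T) : nuSet F ⊆ nuSet G := by
  intro w hw
  rcases hw with ⟨S, hS, hwS⟩
  exact ⟨S, subset_trans hS (h S), hwS⟩

lemma muSet_le {F : Set W → Set W} {T : Set W} (h : F T ⊆ T) : muSet F ⊆ T :=
  fun w hw => hw T h

lemma map_le_muSet {F : Set W → Set W} (hm : ∀ ⦃A B : Set W⦄, A ⊆ B → F A ⊆ F B) :
    F (muSet F) ⊆ muSet F := by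
  intro w hw S hS
  exact hS (hm (muSet_le hS) hw)

lemma muSet_le_map {F : Set W → Set W} (hm : ∀ ⦃A B : Set W⦄, A ⊆ B → F A ⊆ F B) :
    muSet F ⊆ F (muSet F) :=
  fun w hw => hw (F (muSet F)) (hm (map_le_muSet hm))

lemma muSet_mono {F G : Set W → Set W} (h : ∀ T, F T ⊆ G T) : muSet F ⊆ muSet G := by
  intro w hw S hS
  exact hw S (subset_trans (h S) hS)

end CloSoundAux


namespace CloSoundAux

open Formula

variable {W : Type}

/-- Substitution lemma for `semO`, when all overridden formulas are closed
ν-formulas binding the substituted variable `x`, and `Θ` is closed. -/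
lemma semO_subst {M : Kripke W} {σ : Formula → Option (Set W)} {x : ℕ} {Θ : Formula}
    (hΘ : Θ.Closed)
    (hdom : ∀ ψ S, σ ψ = some S → ψ.Closed ∧ ∃ χ, ψ = Formula.nu x χ) :
    ∀ (φ : Formula) (env : ℕ → Set W),
      semO M σ (φ.subst x Θ) env
        = semO M σ φ (Function.update env x (semO M σ Θ env)) := by
  have hn : ∀ ψ : Formula, (∀ χ : Formula, ψ ≠ Formula.nu x χ) → σ ψ = none := by
    intro ψ h
    cases hs : σ ψ with
    | none => rfl
    | some S =>
      rcases (hdom ψ S hs).2 with ⟨χ, hχ⟩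
      exact absurd hχ (h χ)
  intro φ
  induction φ with
  | prop p => intro env; rfl
  | nprop p => intro env; rfl
  | var y =>
    intro env
    by_cases hy : y = x
    · subst hy
      have h1 : σ (Formula.var y) = none := hn _ (by intro χ h; cases h)
      have hsub : (Formula.var y).subst y Θ = Θ := by simp [subst]
      rw [hsub]
      conv_rhs => rw [semO]
      simp [h1]
    · have h1 : σ (Formula.var y) = none := hn _ (by intro χ h; cases h)
      simp only [subst, if_neg hy, semO, h1, Option.getD_none, Function.update_of_ne hy]
  | or a b iha ihb =>
    intro env
    have h1 : σ (Formula.or (a.subst x Θ) (b.subst x Θ)) = none := hn _ (by intro χ h; cases h)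
    have h2 : σ (Formula.or a b) = none := hn _ (by intro χ h; cases h)
    simp only [subst, semO, h1, h2, Option.getD_none, iha env, ihb env]
  | and a b iha ihb =>
    intro env
    have h1 : σ (Formula.and (a.subst x Θ) (b.subst x Θ)) = none := hn _ (by intro χ h; cases h)
    have h2 : σ (Formula.and a b) = none := hn _ (by intro χ h; cases h)
    simp only [subst, semO, h1, h2, Option.getD_none, iha env, ihb env]
  | dia a iha =>
    intro env
    have h1 : σ (Formula.dia (a.subst x Θ)) = none := hn _ (by intro χ h; cases h)
    have h2 : σ (Formula.dia a) = none := hn _ (by intro χ h; cases h)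
    simp only [subst, semO, h1, h2, Option.getD_none, iha env]
  | box a iha =>
    intro env
    have h1 : σ (Formula.box (a.subst x Θ)) = none := hn _ (by intro χ h; cases h)
    have h2 : σ (Formula.box a) = none := hn _ (by intro χ h; cases h)
    simp only [subst, semO, h1, h2, Option.getD_none, iha env]
  | mu y a iha =>
    intro env
    by_cases hy : y = x
    · subst hy
      simp only [subst, if_pos rfl, ↓reduceIte]
      refine semO_agree _ ?_
      intro z hz
      have hzy : z ≠ y := by
        simp only [freeVars, Finset.mem_erase] at hz
        exact hz.1
      simp [Function.update_of_ne hzy]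
    · have h1 : σ (Formula.mu y (a.subst x Θ)) = none := hn _ (by intro χ h; cases h)
      have h2 : σ (Formula.mu y a) = none := hn _ (by intro χ h; cases h)
      simp only [subst, if_neg hy, semO, h1, h2, Option.getD_none]
      have key : ∀ S : Set W, semO M σ (a.subst x Θ) (Function.update env y S)
          = semO M σ a (Function.update (Function.update env x (semO M σ Θ env)) y S) := by
        intro S
        rw [iha (Function.update env y S)]
        rw [semO_closed hΘ (Function.update env y S) env]
        rw [Function.update_comm hy]
      have hset : {S : Set W | semO M σ (a.subst x Θ) (Function.update env y S) ⊆ S}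
          = {S : Set W | semO M σ a
              (Function.update (Function.update env x (semO M σ Θ env)) y S) ⊆ S} := by
        ext S
        rw [Set.mem_setOf_eq, Set.mem_setOf_eq, key S]
      rw [hset]
  | nu y a iha =>
    intro env
    by_cases hy : y = x
    · subst hy
      simp only [subst, if_pos rfl, ↓reduceIte]
      refine semO_agree _ ?_
      intro z hz
      have hzy : z ≠ y := by
        simp only [freeVars, Finset.mem_erase] at hz
        exact hz.1
      simp [Function.update_of_ne hzy]
    · have h1 : σ (Formula.nu y (a.subst x Θ)) = none := by
        refine hn _ ?_
        intro χ h
        injection h with h1 h2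
        exact hy h1
      have h2 : σ (Formula.nu y a) = none := by
        refine hn _ ?_
        intro χ h
        injection h with h1 h2
        exact hy h1
      simp only [subst, if_neg hy, semO, h1, h2, Option.getD_none]
      have key : ∀ S : Set W, semO M σ (a.subst x Θ) (Function.update env y S)
          = semO M σ a (Function.update (Function.update env x (semO M σ Θ env)) y S) := by
        intro S
        rw [iha (Function.update env y S)]
        rw [semO_closed hΘ (Function.update env y S) env]
        rw [Function.update_comm hy]
      have hset : {S : Set W | S ⊆ semO M σ (a.subst x Θ) (Function.update env y S)}
          = {S : Set W | S ⊆ semO M σ a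
              (Function.update (Function.update env x (semO M σ Θ env)) y S)} := by
        ext S
        rw [Set.mem_setOf_eq, Set.mem_setOf_eq, key S]
      rw [hset]

/-! ### combining override assignments; overrides that cannot occur -/

def oplus (σ τ : Formula → Option (Set W)) : Formula → Option (Set W) :=
  fun ψ => match σ ψ with
    | some S => some S
    | none => τ ψ

def fsize : Formula → ℕ
  | .prop _ => 1
  | .nprop _ => 1
  | .var _ => 1
  | .or a b => fsize a + fsize b + 1
  | .and a b => fsize a + fsize b + 1
  | .dia a => fsize a + 1
  | .box a => fsize a + 1
  | .mu _ a => fsize a + 1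
  | .nu _ a => fsize a + 1

/-- An override of a single big formula is invisible on small formulas. -/
lemma semO_oplus_small {M : Kripke W} {σ τ : Formula → Option (Set W)} {Ξ : Formula}
    (hτ : ∀ ψ, ψ ≠ Ξ → τ ψ = none) :
    ∀ (φ : Formula), fsize φ < fsize Ξ → ∀ env,
      semO M (oplus σ τ) φ env = semO M σ φ env := by
  have hov : ∀ φ : Formula, fsize φ < fsize Ξ → oplus σ τ φ = σ φ := by
    intro φ h
    have hne : φ ≠ Ξ := by intro e; subst e; exact lt_irrefl _ h
    unfold oplus
    cases hs : σ φ with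
    | some S => rfl
    | none => simpa using hτ φ hne
  intro φ
  induction φ with
  | prop p => intro h env; simp [semO, hov _ h]
  | nprop p => intro h env; simp [semO, hov _ h]
  | var y => intro h env; simp [semO, hov _ h]
  | or a b iha ihb =>
    intro h env
    have ha : fsize a < fsize Ξ := by simp only [fsize] at h; omega
    have hb : fsize b < fsize Ξ := by simp only [fsize] at h; omega
    simp only [semO, hov _ h, iha ha, ihb hb]
  | and a b iha ihb =>
    intro h env
    have ha : fsize a < fsize Ξ := by simp only [fsize] at h; omega
    have hb : fsize b < fsize Ξ := by simp only [fsize] at h; omega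
    simp only [semO, hov _ h, iha ha, ihb hb]
  | dia a iha =>
    intro h env
    have ha : fsize a < fsize Ξ := by simp only [fsize] at h; omega
    simp only [semO, hov _ h, iha ha]
  | box a iha =>
    intro h env
    have ha : fsize a < fsize Ξ := by simp only [fsize] at h; omega
    simp only [semO, hov _ h, iha ha]
  | mu y a iha =>
    intro h env
    have ha : fsize a < fsize Ξ := by simp only [fsize] at h; omega
    simp only [semO, hov _ h]
    have hset : {S : Set W | semO M (oplus σ τ) a (Function.update env y S) ⊆ S}
        = {S : Set W | semO M σ a (Function.update env y S) ⊆ S} := by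
      ext S
      rw [Set.mem_setOf_eq, Set.mem_setOf_eq, iha ha]
    rw [hset]
  | nu y a iha =>
    intro h env
    have ha : fsize a < fsize Ξ := by simp only [fsize] at h; omega
    simp only [semO, hov _ h]
    have hset : {S : Set W | S ⊆ semO M (oplus σ τ) a (Function.update env y S)}
        = {S : Set W | S ⊆ semO M σ a (Function.update env y S)} := by
      ext S
      rw [Set.mem_setOf_eq, Set.mem_setOf_eq, iha ha]
    rw [hset]

lemma fsize_body_lt {x : ℕ} {φ : Formula} : fsize φ < fsize (Formula.nu x φ) := by
  simp only [fsize]; omega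

end CloSoundAux


namespace CloSoundAux

open Formula

variable {W : Type}

lemma semO_env_mono {M : Kripke W} {σ : Formula → Option (Set W)} (φ : Formula)
    {env env' : ℕ → Set W} (h : ∀ y, env y ⊆ env' y) :
    semO M σ φ env ⊆ semO M σ φ env' := by
  refine semO_le ?_ ?_ ?_ φ h
  · intro ψ S S' hs hs'
    rw [hs] at hs'
    exact subset_of_eq (Option.some.inj hs')
  · intro ψ S' hn hs
    rw [hn] at hs
    cases hs
  · intro ψ S hs hn
    rw [hs] at hn
    cases hn

lemma update_mono {env env' : ℕ → Set W} {x : ℕ} {S S' : Set W}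
    (h : ∀ y, env y ⊆ env' y) (hS : S ⊆ S') :
    ∀ y, Function.update env x S y ⊆ Function.update env' x S' y := by
  intro y
  by_cases hy : y = x
  · subst hy; simp [Function.update_self]; exact hS
  · simp [Function.update_of_ne hy]; exact h y

open Classical in
noncomputable def restrictO (dm : Set Formula) (V : Formula → Set W) :
    Formula → Option (Set W) :=
  fun ψ => if ψ ∈ dm then some (V ψ) else none

lemma restrictO_mem {dm : Set Formula} {V : Formula → Set W} {ψ : Formula} (h : ψ ∈ dm) :
    restrictO dm V ψ = some (V ψ) := by simp [restrictO, h]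

lemma restrictO_not_mem {dm : Set Formula} {V : Formula → Set W} {ψ : Formula} (h : ψ ∉ dm) :
    restrictO dm V ψ = none := by simp [restrictO, h]

lemma restrictO_eq_some {dm : Set Formula} {V : Formula → Set W} {ψ : Formula} {S : Set W}
    (h : restrictO dm V ψ = some S) : ψ ∈ dm ∧ S = V ψ := by
  by_cases hm : ψ ∈ dm
  · rw [restrictO_mem hm] at h
    exact ⟨hm, (Option.some.inj h).symm⟩
  · rw [restrictO_not_mem hm] at h
    cases h

lemma restrictO_eq_none {dm : Set Formula} {V : Formula → Set W} {ψ : Formula}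
    (h : restrictO dm V ψ = none) : ψ ∉ dm := by
  intro hm
  rw [restrictO_mem hm] at h
  cases h

/-- Values-monotonicity for restricted overrides. -/
lemma semO_restr_mono {M : Kripke W} {dm : Set Formula} {V V' : Formula → Set W}
    (h : ∀ ψ ∈ dm, V ψ ⊆ V' ψ) (φ : Formula) {env env' : ℕ → Set W}
    (henv : ∀ y, env y ⊆ env' y) :
    semO M (restrictO dm V) φ env ⊆ semO M (restrictO dm V') φ env' := by
  refine semO_le ?_ ?_ ?_ φ henv
  · intro ψ S S' hs hs'
    rcases restrictO_eq_some hs with ⟨hm, rfl⟩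
    rcases restrictO_eq_some hs' with ⟨_, rfl⟩
    exact h ψ hm
  · intro ψ S' hn hs
    exact absurd (restrictO_eq_some hs).1 (restrictO_eq_none hn)
  · intro ψ S hs hn
    exact absurd (restrictO_eq_some hs).1 (restrictO_eq_none hn)

/-- The self-referential family operator. -/
noncomputable def PhiOp (M : Kripke W) (env₀ : ℕ → Set W) (dm : Set Formula)
    (E : Formula → Set W) : (Formula → Set W) →o (Formula → Set W) where
  toFun V := fun Ψ => match Ψ with
    | Formula.nu x χ => E (Formula.nu x χ)
        ∪ semO M (restrictO dm V) χ (Function.update env₀ x (V (Formula.nu x χ)))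
    | _ => Set.univ
  monotone' := by
    intro V V' h Ψ
    cases Ψ with
    | nu x χ =>
      simp only
      refine Set.union_subset_union subset_rfl ?_
      refine semO_restr_mono (fun ψ hψ => h ψ) χ (update_mono (fun y => subset_rfl) (h _))
    | prop p => exact le_refl _
    | nprop p => exact le_refl _
    | var y => exact le_refl _
    | or a b => exact le_refl _
    | and a b => exact le_refl _
    | dia a => exact le_refl _
    | box a => exact le_refl _
    | mu y a => exact le_refl _

noncomputable def famO (M : Kripke W) (env₀ : ℕ → Set W) (dm : Set Formula)
    (E : Formula → Set W) : Formula → Set W :=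
  OrderHom.gfp (PhiOp M env₀ dm E)

lemma famO_nu (M : Kripke W) (env₀ : ℕ → Set W) (dm : Set Formula) (E : Formula → Set W)
    (x : ℕ) (χ : Formula) :
    famO M env₀ dm E (Formula.nu x χ)
      = E (Formula.nu x χ)
        ∪ semO M (restrictO dm (famO M env₀ dm E)) χ
            (Function.update env₀ x (famO M env₀ dm E (Formula.nu x χ))) := by
  conv_lhs => rw [famO, ← OrderHom.map_gfp (PhiOp M env₀ dm E)]
  rfl

lemma le_famO (M : Kripke W) (env₀ : ℕ → Set W) (dm : Set Formula) (E : Formula → Set W)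
    {V : Formula → Set W} (h : V ≤ PhiOp M env₀ dm E V) : V ≤ famO M env₀ dm E := by
  unfold famO
  exact OrderHom.le_gfp (f := PhiOp M env₀ dm E) h

/-- The main monotonicity lemma in the token set / escape sets. -/
lemma semO_fam_mono (M : Kripke W) (env₀ : ℕ → Set W) {dm dm' : Set Formula}
    {E E' : Formula → Set W} (hdm : dm ⊆ dm') (hE : ∀ Ψ, E Ψ ⊆ E' Ψ)
    (hcl : ∀ Ψ ∈ dm', Ψ.Closed) (φ : Formula) (env : ℕ → Set W) :
    semO M (restrictO dm (famO M env₀ dm E)) φ env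
      ⊆ semO M (restrictO dm' (famO M env₀ dm' E')) φ env := by
  set σf := famO M env₀ dm E with hσf
  set Vs : Formula → Set W := fun Ψ => semO M (restrictO dm σf) Ψ env₀ with hVs
  have hVfix : ∀ ψ ∈ dm, Vs ψ = σf ψ := fun ψ h => semO_some (restrictO_mem h) env₀
  -- extension equality
  have hext : ∀ (χ : Formula) (env' : ℕ → Set W),
      semO M (restrictO dm' Vs) χ env' = semO M (restrictO dm σf) χ env' := by
    intro χ env'
    apply Set.Subset.antisymm
    · refine semO_le ?_ ?_ ?_ χ (fun y => subset_rfl)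
      · intro ψ S S' hs hs'
        rcases restrictO_eq_some hs with ⟨hm', rfl⟩
        rcases restrictO_eq_some hs' with ⟨hm, rfl⟩
        rw [hVfix ψ hm]
      · intro ψ S' hn hs
        exact absurd (hdm (restrictO_eq_some hs).1) (restrictO_eq_none hn)
      · intro ψ S hs hn
        rcases restrictO_eq_some hs with ⟨hm', rfl⟩
        intro env''
        exact le_of_eq (semO_closed (hcl ψ hm') env₀ env'')
    · refine semO_le ?_ ?_ ?_ χ (fun y => subset_rfl)
      · intro ψ S S' hs hs'
        rcases restrictO_eq_some hs with ⟨hm, rfl⟩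
        rcases restrictO_eq_some hs' with ⟨hm', rfl⟩
        rw [hVfix ψ hm]
      · intro ψ S' hn hs
        rcases restrictO_eq_some hs with ⟨hm', rfl⟩
        intro env''
        exact le_of_eq (semO_closed (hcl ψ hm') env'' env₀)
      · intro ψ S hs hn
        exact absurd (hdm (restrictO_eq_some hs).1) (restrictO_eq_none hn)
  -- V* is a post-fixpoint of the primed operator
  have hpost : Vs ≤ PhiOp M env₀ dm' E' Vs := by
    intro Ψ
    cases Ψ with
    | nu x χ =>
      show Vs (Formula.nu x χ) ⊆ E' (Formula.nu x χ)
          ∪ semO M (restrictO dm' Vs) χ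
              (Function.update env₀ x (Vs (Formula.nu x χ)))
      by_cases hmem : (Formula.nu x χ) ∈ dm
      · rw [hVfix _ hmem]
        have hfix := famO_nu M env₀ dm E x χ
        rw [hext χ (Function.update env₀ x (σf (Formula.nu x χ)))]
        calc σf (Formula.nu x χ)
            = E (Formula.nu x χ) ∪ semO M (restrictO dm σf) χ
                (Function.update env₀ x (σf (Formula.nu x χ))) := hfix
          _ ⊆ E' (Formula.nu x χ) ∪ semO M (restrictO dm σf) χ
                (Function.update env₀ x (σf (Formula.nu x χ))) :=
              Set.union_subset_union (hE _) subset_rfl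
      · have hv : Vs (Formula.nu x χ)
            = ⋃₀ {S : Set W | S ⊆ semO M (restrictO dm σf) χ (Function.update env₀ x S)} := by
          rw [hVs]
          simp only [semO, restrictO_not_mem hmem, Option.getD_none]
        have hmono : ∀ ⦃A B : Set W⦄, A ⊆ B →
            semO M (restrictO dm σf) χ (Function.update env₀ x A)
              ⊆ semO M (restrictO dm σf) χ (Function.update env₀ x B) := by
          intro A B hAB
          exact semO_env_mono χ (update_mono (fun y => subset_rfl) hAB)
        have h1 : Vs (Formula.nu x χ)
            ⊆ semO M (restrictO dm σf) χ
                (Function.update env₀ x (Vs (Formula.nu x χ))) := by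
          rw [hv]
          exact nuSet_le_map hmono
        refine subset_trans h1 ?_
        rw [hext χ (Function.update env₀ x (Vs (Formula.nu x χ)))]
        exact Set.subset_union_right
    | prop p => exact Set.subset_univ _
    | nprop p => exact Set.subset_univ _
    | var y => exact Set.subset_univ _
    | or a b => exact Set.subset_univ _
    | and a b => exact Set.subset_univ _
    | dia a => exact Set.subset_univ _
    | box a => exact Set.subset_univ _
    | mu y a => exact Set.subset_univ _
  have hle : Vs ≤ famO M env₀ dm' E' := le_famO M env₀ dm' E' hpost
  calc semO M (restrictO dm σf) φ env
      = semO M (restrictO dm' Vs) φ env := (hext φ env).symm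
    _ ⊆ semO M (restrictO dm' (famO M env₀ dm' E')) φ env :=
        semO_restr_mono (fun ψ _ => hle ψ) φ (fun y => subset_rfl)

end CloSoundAux


namespace CloSoundAux

open Formula

variable {W : Type}

/-- The core semantic argument justifying the `clo` rule. -/
lemma clo_core (M : Kripke W) (env₀ : ℕ → Set W) (dm : Set Formula) (E : Formula → Set W)
    (x : ℕ) (φf : Formula) (S : Set W)
    (hdmcl : ∀ Ψ ∈ dm, Ψ.Closed)
    (hdmsh : ∀ Ψ ∈ dm, ∃ χ, Ψ = Formula.nu x χ)
    (hΞcl : (Formula.nu x φf).Closed)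
    (hEΞ : Formula.nu x φf ∉ dm → E (Formula.nu x φf) = ∅)
    (hprem : S ⊆ semO M
        (restrictO (dm ∪ {Formula.nu x φf})
          (famO M env₀ (dm ∪ {Formula.nu x φf})
            (fun Ψ => E Ψ ∪ (if Ψ = Formula.nu x φf then S else ∅))))
        (φf.subst x (Formula.nu x φf)) env₀) :
    S ⊆ semO M (restrictO dm (famO M env₀ dm E)) (Formula.nu x φf) env₀ := by
  set Ξ := Formula.nu x φf with hΞdef
  set dm' : Set Formula := dm ∪ {Ξ} with hdm'
  set E' : Formula → Set W := fun Ψ => E Ψ ∪ (if Ψ = Ξ then S else ∅) with hE'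
  set σ' := famO M env₀ dm' E' with hσ'
  have hE'Ξ : E' Ξ = E Ξ ∪ S := by simp [hE']
  have hE'ne : ∀ Ψ, Ψ ≠ Ξ → E' Ψ = E Ψ := by
    intro Ψ h
    simp [hE', h]
  have hΞdm' : Ξ ∈ dm' := Or.inr rfl
  have hdm'cl : ∀ Ψ ∈ dm', Ψ.Closed := by
    intro Ψ h
    rcases h with h | h
    · exact hdmcl Ψ h
    · rw [Set.mem_singleton_iff] at h; subst h; exact hΞcl
  have hdm'sh : ∀ Ψ ∈ dm', ∃ χ, Ψ = Formula.nu x χ := by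
    intro Ψ h
    rcases h with h | h
    · exact hdmsh Ψ h
    · rw [Set.mem_singleton_iff] at h; subst h; exact ⟨φf, rfl⟩
  have hdom : ∀ ψ Sv, restrictO dm' σ' ψ = some Sv → ψ.Closed ∧ ∃ χ, ψ = Formula.nu x χ := by
    intro ψ Sv hs
    rcases restrictO_eq_some hs with ⟨hm, rfl⟩
    exact ⟨hdm'cl ψ hm, hdm'sh ψ hm⟩
  have hΞval : semO M (restrictO dm' σ') Ξ env₀ = σ' Ξ := semO_some (restrictO_mem hΞdm') env₀
  have hprem' : S ⊆ semO M (restrictO dm' σ') φf (Function.update env₀ x (σ' Ξ)) := by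
    have hse := semO_subst (M := M) (σ := restrictO dm' σ') (x := x) (Θ := Ξ) hΞcl hdom φf env₀
    rw [hse, hΞval] at hprem
    exact hprem
  have hfix' : σ' Ξ = E' Ξ ∪ semO M (restrictO dm' σ') φf (Function.update env₀ x (σ' Ξ)) :=
    famO_nu M env₀ dm' E' x φf
  have hSin : S ⊆ σ' Ξ := by
    refine subset_trans ?_ (subset_of_eq hfix'.symm)
    refine subset_trans ?_ (Set.subset_union_left)
    rw [hE'Ξ]
    exact Set.subset_union_right
  by_cases hmem : Ξ ∈ dm
  · -- Case A
    have hdmeq : dm' = dm := by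
      rw [hdm']
      apply Set.union_eq_self_of_subset_right
      simpa using hmem
    have hroveq : restrictO dm' σ' = restrictO dm σ' := by rw [hdmeq]
    have hpost : σ' ≤ PhiOp M env₀ dm E σ' := by
      intro Ψ
      cases Ψ with
      | nu y χ =>
        show σ' (Formula.nu y χ) ⊆ E (Formula.nu y χ)
            ∪ semO M (restrictO dm σ') χ (Function.update env₀ y (σ' (Formula.nu y χ)))
        have hfixΨ := famO_nu M env₀ dm' E' y χ
        rw [← hσ', hroveq] at hfixΨ
        refine subset_trans (subset_of_eq hfixΨ) ?_
        by_cases hΨΞ : Formula.nu y χ = Ξ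
        · rw [hΞdef] at hΨΞ
          injection hΨΞ with h1 h2
          subst h1; subst h2
          refine Set.union_subset ?_ Set.subset_union_right
          rw [hE'Ξ]
          refine Set.union_subset ?_ ?_
          · exact fun w hw => Or.inl hw
          · refine subset_trans ?_ Set.subset_union_right
            rw [hroveq] at hprem'
            exact hprem'
        · rw [hE'ne _ hΨΞ]
      | prop p => exact Set.subset_univ _
      | nprop p => exact Set.subset_univ _
      | var y => exact Set.subset_univ _
      | or a b => exact Set.subset_univ _
      | and a b => exact Set.subset_univ _
      | dia a => exact Set.subset_univ _
      | box a => exact Set.subset_univ _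
      | mu y a => exact Set.subset_univ _
    have hle : σ' ≤ famO M env₀ dm E := le_famO M env₀ dm E hpost
    have hg : semO M (restrictO dm (famO M env₀ dm E)) Ξ env₀ = famO M env₀ dm E Ξ :=
      semO_some (restrictO_mem hmem) env₀
    rw [hg]
    exact subset_trans hSin (hle Ξ)
  · -- Case B
    have hEΞe := hEΞ hmem
    set τ : Formula → Option (Set W) :=
      fun ψ => if ψ = Ξ then some (σ' Ξ) else none with hτdef
    have hτn : ∀ ψ, ψ ≠ Ξ → τ ψ = none := by
      intro ψ h
      simp [hτdef, h]
    have hτΞ : τ Ξ = some (σ' Ξ) := by simp [hτdef]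
    have heq : restrictO dm' σ' = oplus (restrictO dm σ') τ := by
      funext ψ
      by_cases hm : ψ ∈ dm
      · rw [restrictO_mem (Or.inl hm : ψ ∈ dm')]
        unfold oplus
        rw [restrictO_mem hm]
      · by_cases hΞe : ψ = Ξ
        · subst hΞe
          rw [restrictO_mem hΞdm']
          unfold oplus
          rw [restrictO_not_mem hm, hτΞ]
        · have hnm : ψ ∉ dm' := by
            intro h
            rcases h with h | h
            · exact hm h
            · exact hΞe h
          rw [restrictO_not_mem hnm]
          unfold oplus
          rw [restrictO_not_mem hm, hτn ψ hΞe]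
    have hsmall : ∀ env, semO M (restrictO dm' σ') φf env = semO M (restrictO dm σ') φf env := by
      intro env
      rw [heq]
      exact semO_oplus_small hτn φf fsize_body_lt env
    have hprem'' : S ⊆ semO M (restrictO dm σ') φf (Function.update env₀ x (σ' Ξ)) := by
      rw [← hsmall]
      exact hprem'
    have hbody : φf.freeVars ⊆ {x} := nu_closed_body hΞcl
    have hstar0 : σ' Ξ ⊆ semO M (restrictO dm σ') φf (Function.update env₀ x (σ' Ξ)) := by
      refine subset_trans (subset_of_eq hfix') ?_
      refine Set.union_subset ?_ (subset_of_eq (hsmall _))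
      rw [hE'Ξ, hEΞe]
      refine Set.union_subset (Set.empty_subset _) hprem''
    have hNS : ∀ env, σ' Ξ ⊆ semO M (restrictO dm σ') Ξ env := by
      intro env
      have hval : semO M (restrictO dm σ') Ξ env
          = ⋃₀ {T : Set W | T ⊆ semO M (restrictO dm σ') φf (Function.update env x T)} := by
        simp +zetaDelta only [semO, restrictO_not_mem hmem, Option.getD_none]
      have hfe : ∀ T : Set W, semO M (restrictO dm σ') φf (Function.update env x T)
          = semO M (restrictO dm σ') φf (Function.update env₀ x T) := by
        intro T
        refine semO_agree φf ?_
        intro y hy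
        have hyx : y = x := Finset.mem_singleton.1 (hbody hy)
        subst hyx
        simp [Function.update_self]
      rw [hval]
      refine le_nuSet ?_
      rw [hfe]
      exact hstar0
    have hpost : σ' ≤ PhiOp M env₀ dm E σ' := by
      intro Ψ
      cases Ψ with
      | nu y χ =>
        show σ' (Formula.nu y χ) ⊆ E (Formula.nu y χ)
            ∪ semO M (restrictO dm σ') χ (Function.update env₀ y (σ' (Formula.nu y χ)))
        have hfixΨ := famO_nu M env₀ dm' E' y χ
        rw [← hσ'] at hfixΨ
        refine subset_trans (subset_of_eq hfixΨ) ?_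
        have hrem : ∀ env, semO M (restrictO dm' σ') χ env
            ⊆ semO M (restrictO dm σ') χ env := by
          intro env
          rw [heq]
          refine semO_le ?_ ?_ ?_ χ (fun z => subset_rfl)
          · intro ψ Sv Sv' hs hs'
            rcases restrictO_eq_some hs' with ⟨hm, rfl⟩
            unfold oplus at hs
            rw [restrictO_mem hm] at hs
            exact subset_of_eq (Option.some.inj hs).symm
          · intro ψ Sv' hn hs
            rcases restrictO_eq_some hs with ⟨hm, rfl⟩
            unfold oplus at hn
            rw [restrictO_mem hm] at hn
            cases hn
          · intro ψ Sv hs hn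
            have hm := restrictO_eq_none hn
            unfold oplus at hs
            rw [restrictO_not_mem hm] at hs
            by_cases hΞe : ψ = Ξ
            · subst hΞe
              rw [hτΞ] at hs
              intro env'
              exact subset_trans (subset_of_eq (Option.some.inj hs).symm) (hNS env')
            · rw [hτn ψ hΞe] at hs
              cases hs
        by_cases hΨΞ : Formula.nu y χ = Ξ
        · rw [hΞdef] at hΨΞ
          injection hΨΞ with h1 h2
          subst h1; subst h2
          refine Set.union_subset ?_ ?_
          · rw [hE'Ξ, hEΞe]
            refine Set.union_subset (Set.empty_subset _) ?_
            refine subset_trans hprem'' Set.subset_union_right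
          · refine subset_trans (hrem _) Set.subset_union_right
        · rw [hE'ne _ hΨΞ]
          exact Set.union_subset_union subset_rfl (hrem _)
      | prop p => exact Set.subset_univ _
      | nprop p => exact Set.subset_univ _
      | var y => exact Set.subset_univ _
      | or a b => exact Set.subset_univ _
      | and a b => exact Set.subset_univ _
      | dia a => exact Set.subset_univ _
      | box a => exact Set.subset_univ _
      | mu y a => exact Set.subset_univ _
    have hle : σ' ≤ famO M env₀ dm E := le_famO M env₀ dm E hpost
    have hgoal : semO M (restrictO dm (famO M env₀ dm E)) Ξ env₀
        = ⋃₀ {T : Set W | T ⊆ semO M (restrictO dm (famO M env₀ dm E)) φf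
            (Function.update env₀ x T)} := by
      simp +zetaDelta only [semO, restrictO_not_mem hmem, Option.getD_none]
    rw [hgoal]
    refine subset_trans hSin ?_
    have hstarNu : σ' Ξ ⊆ ⋃₀ {T : Set W | T ⊆ semO M (restrictO dm σ') φf
        (Function.update env₀ x T)} := le_nuSet hstar0
    refine subset_trans hstarNu ?_
    refine nuSet_mono ?_
    intro T
    exact semO_restr_mono (fun ψ _ => hle ψ) φf (fun y => subset_rfl)

end CloSoundAux


namespace CloSoundAux

open Formula

variable {W : Type}

/-! ### closedness of closures and labels -/

lemma tstep_closed {φ ψ : Formula} (h : TStep φ ψ) (hφ : φ.Closed) : ψ.Closed := by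
  cases h with
  | orL a b =>
    rw [Closed, freeVars] at hφ
    rcases Finset.union_eq_empty.1 hφ with ⟨h1, h2⟩
    exact h1
  | orR a b =>
    rw [Closed, freeVars] at hφ
    rcases Finset.union_eq_empty.1 hφ with ⟨h1, h2⟩
    exact h2
  | andL a b =>
    rw [Closed, freeVars] at hφ
    rcases Finset.union_eq_empty.1 hφ with ⟨h1, h2⟩
    exact h1
  | andR a b =>
    rw [Closed, freeVars] at hφ
    rcases Finset.union_eq_empty.1 hφ with ⟨h1, h2⟩
    exact h2
  | dia a => exact hφ
  | box a => exact hφ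
  | mu x a => exact closed_subst (mu_closed_body hφ) hφ
  | nu x a => exact closed_subst (nu_closed_body hφ) hφ

lemma clos_closed {Γ : Sequent} (hΓ : ClosedSeq Γ) {ψ : Formula} (h : ψ ∈ Clos Γ) :
    ψ.Closed := by
  rcases h with ⟨φ, hφ, hrt⟩
  induction hrt with
  | refl => exact hΓ φ hφ
  | tail hab hbc ih => exact tstep_closed hbc ih

lemma varle_eq {Γ : Sequent} (hΓ : ClosedSeq Γ) {m x : ℕ} (h : VarLe Γ m x) : m = x := by
  rcases h with h | ⟨b, φf, hmem, hfree⟩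
  · exact h
  · have hc := clos_closed hΓ hmem
    rw [Closed] at hc
    rw [hc] at hfree
    exact absurd hfree (Finset.notMem_empty m)

lemma stripSeq_annSeq (Γ : Sequent) : stripSeq (annSeq Γ) = Γ := by
  rw [stripSeq, annSeq, Finset.image_image]
  exact Finset.image_id'

def ClosedA (Δ : ASequent) : Prop := ∀ p ∈ Δ, Formula.Closed p.1

lemma eta_unfold_closed {b : Bool} {x : ℕ} {φf : Formula}
    (h : (Formula.eta b x φf).Closed) : (Formula.unfoldEta b x φf).Closed := by
  cases b
  · have h1 : Formula.eta false x φf = Formula.mu x φf := by simp [Formula.eta]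
    have h2 : Formula.unfoldEta false x φf = Formula.unfoldMu x φf := by
      simp [Formula.unfoldEta]
    rw [h1] at h
    rw [h2, Formula.unfoldMu]
    exact closed_subst (mu_closed_body h) h
  · have h1 : Formula.eta true x φf = Formula.nu x φf := by simp [Formula.eta]
    have h2 : Formula.unfoldEta true x φf = Formula.unfoldNu x φf := by
      simp [Formula.unfoldEta]
    rw [h1] at h
    rw [h2, Formula.unfoldNu]
    exact closed_subst (nu_closed_body h) h

lemma prems_closed {r : CloRule} (hnc : ∀ Γc A, r ≠ CloRule.cut Γc A)
    (hc : ClosedA r.concl) : ∀ Δ ∈ r.prems, ClosedA Δ := by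
  cases r with
  | ax p => intro Δ hΔ; simp [CloRule.prems] at hΔ
  | orR Γc φ ψ a =>
    intro Δ hΔ
    simp only [CloRule.prems, List.mem_singleton] at hΔ
    subst hΔ
    have hor : (Formula.or φ ψ).Closed := hc (Formula.or φ ψ, a) (by simp [CloRule.concl])
    rw [Closed, freeVars] at hor
    rcases Finset.union_eq_empty.1 hor with ⟨h1, h2⟩
    intro p hp
    rcases Finset.mem_insert.1 hp with h | hp
    · subst h; exact h1
    rcases Finset.mem_insert.1 hp with h | hp
    · subst h; exact h2
    · exact hc p (Finset.mem_insert_of_mem hp)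
  | andR Γc φ ψ a =>
    intro Δ hΔ
    have hand : (Formula.and φ ψ).Closed := hc (Formula.and φ ψ, a) (by simp [CloRule.concl])
    rw [Closed, freeVars] at hand
    rcases Finset.union_eq_empty.1 hand with ⟨h1, h2⟩
    simp only [CloRule.prems, List.mem_cons, List.mem_singleton] at hΔ
    rcases hΔ with hΔ | hΔ | hΔ
    · subst hΔ
      intro p hp
      rcases Finset.mem_insert.1 hp with h | hp
      · subst h; exact h1
      · exact hc p (Finset.mem_insert_of_mem hp)
    · subst hΔ
      intro p hp
      rcases Finset.mem_insert.1 hp with h | hp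
      · subst h; exact h2
      · exact hc p (Finset.mem_insert_of_mem hp)
    · simp at hΔ
  | weak Γc φ a =>
    intro Δ hΔ
    simp only [CloRule.prems, List.mem_singleton] at hΔ
    subst hΔ
    intro p hp
    exact hc p (Finset.mem_insert_of_mem hp)
  | boxR Γc φ a =>
    intro Δ hΔ
    simp only [CloRule.prems, List.mem_singleton] at hΔ
    subst hΔ
    have hbox : (Formula.box φ).Closed := hc (Formula.box φ, a) (by simp [CloRule.concl])
    intro p hp
    rcases Finset.mem_insert.1 hp with h | hp
    · subst h
      exact hbox
    · have : (Formula.dia p.1, p.2) ∈ CloRule.concl (CloRule.boxR Γc φ a) := by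
        simp only [CloRule.concl]
        refine Finset.mem_insert_of_mem ?_
        exact Finset.mem_image_of_mem _ hp
      have hcd := hc (Formula.dia p.1, p.2) this
      exact hcd
  | unfold Γc b x φf a =>
    intro Δ hΔ
    simp only [CloRule.prems, List.mem_singleton] at hΔ
    subst hΔ
    have heta : (Formula.eta b x φf).Closed := hc (Formula.eta b x φf, a) (by simp [CloRule.concl])
    intro p hp
    rcases Finset.mem_insert.1 hp with h | hp
    · subst h
      exact eta_unfold_closed heta
    · exact hc p (Finset.mem_insert_of_mem hp)
  | exp l =>
    intro Δ hΔ
    simp only [CloRule.prems, List.mem_singleton] at hΔ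
    subst hΔ
    intro p hp
    rcases List.mem_map.1 (List.mem_toFinset.1 hp) with ⟨t, ht, hte⟩
    have : (t.1, t.2.2) ∈ CloRule.concl (CloRule.exp l) := by
      simp only [CloRule.concl]
      exact List.mem_toFinset.2 (List.mem_map.2 ⟨t, ht, rfl⟩)
    have := hc _ this
    rw [← hte]
    exact this
  | clo Γc x φf a x' =>
    intro Δ hΔ
    simp only [CloRule.prems, List.mem_singleton] at hΔ
    subst hΔ
    have hnu : (Formula.nu x φf).Closed := hc (Formula.nu x φf, a) (by simp [CloRule.concl])
    intro p hp
    rcases Finset.mem_insert.1 hp with h | hp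
    · subst h
      exact closed_subst (nu_closed_body hnu) hnu
    · exact hc p (Finset.mem_insert_of_mem hp)
  | asm Γc x φf a x' => intro Δ hΔ; simp [CloRule.prems] at hΔ
  | cut Γc A => exact absurd rfl (hnc Γc A)

lemma label_closed {Γ₀ : Sequent} (hΓ₀ : ClosedSeq Γ₀) (ρ : CloDeriv false (annSeq Γ₀)) :
    ∀ u ∈ ρ.tree, ClosedA (ρ.label u) := by
  intro u
  induction u using List.reverseRecOn with
  | nil =>
    intro hu
    rw [ρ.label_root]
    intro p hp
    rcases Finset.mem_image.1 hp with ⟨φ, hφ, he⟩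
    rw [← he]
    exact hΓ₀ φ hφ
  | append_singleton u n ih =>
    intro hu
    have hu' : u ∈ ρ.tree := ρ.prefix_closed u n hu
    have hn : n < (ρ.rule u).prems.length := (ρ.child_iff u hu' n).1 hu
    have hlab := ρ.label_child u hu' n hn
    rw [hlab]
    have hnc : ∀ Γc A, ρ.rule u ≠ CloRule.cut Γc A := by
      intro Γc A he
      have := ρ.cut_ok u hu' (by rw [he]; trivial)
      cases this
    have hcl : ClosedA (ρ.rule u).concl := by
      rw [← ρ.label_concl u hu']
      exact ih hu'
    exact prems_closed hnc hcl _ (List.get_mem _ ⟨n, hn⟩)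

/-! ### interpretation of annotated sequents -/

def TD : Type := ASequent × ℕ × Formula × Ann

def ΘD (D : Name → TD) (n : Name) : Formula := Formula.nu (D n).2.1 (D n).2.2.1

def dmA (O : Set Name) (D : Name → TD) (c : Ann) : Set Formula :=
  {Ψ | ∃ n, n ∈ c ∧ n ∈ O ∧ ΘD D n = Ψ}

def EA (O : Set Name) (D : Name → TD) (η : Name → Set W) (c : Ann) : Formula → Set W :=
  fun Ψ => {w | ∃ n, n ∈ c ∧ n ∈ O ∧ ΘD D n = Ψ ∧ w ∈ η n}

noncomputable def Jint (M : Kripke W) (env₀ : ℕ → Set W) (O : Set Name) (D : Name → TD)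
    (η : Name → Set W) (φ : Formula) (c : Ann) : Set W :=
  semO M (restrictO (dmA O D c) (famO M env₀ (dmA O D c) (EA O D η c))) φ env₀

def SInt (M : Kripke W) (env₀ : ℕ → Set W) (O : Set Name) (D : Name → TD)
    (η : Name → Set W) (Δ : ASequent) : Set W :=
  {w | ∃ p ∈ Δ, w ∈ Jint M env₀ O D η p.1 p.2}

lemma dmA_only_nu {O : Set Name} {D : Name → TD} {c : Ann} {Ψ : Formula}
    (h : Ψ ∈ dmA O D c) : ∃ y χ, Ψ = Formula.nu y χ := by
  rcases h with ⟨n, _, _, he⟩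
  exact ⟨(D n).2.1, (D n).2.2.1, he.symm⟩

lemma Jint_or {M : Kripke W} {env₀ : ℕ → Set W} {O : Set Name} {D : Name → TD}
    {η : Name → Set W} {a b : Formula} {c : Ann} :
    Jint M env₀ O D η (Formula.or a b) c = Jint M env₀ O D η a c ∪ Jint M env₀ O D η b c := by
  have hn : restrictO (dmA O D c) (famO M env₀ (dmA O D c) (EA O D η c)) (Formula.or a b)
      = none := by
    refine restrictO_not_mem ?_
    intro h
    rcases dmA_only_nu h with ⟨y, χ, he⟩
    cases he
  simp only [Jint, semO, hn, Option.getD_none]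

lemma Jint_and {M : Kripke W} {env₀ : ℕ → Set W} {O : Set Name} {D : Name → TD}
    {η : Name → Set W} {a b : Formula} {c : Ann} :
    Jint M env₀ O D η (Formula.and a b) c = Jint M env₀ O D η a c ∩ Jint M env₀ O D η b c := by
  have hn : restrictO (dmA O D c) (famO M env₀ (dmA O D c) (EA O D η c)) (Formula.and a b)
      = none := by
    refine restrictO_not_mem ?_
    intro h
    rcases dmA_only_nu h with ⟨y, χ, he⟩
    cases he
  simp only [Jint, semO, hn, Option.getD_none]

lemma Jint_dia {M : Kripke W} {env₀ : ℕ → Set W} {O : Set Name} {D : Name → TD}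
    {η : Name → Set W} {a : Formula} {c : Ann} :
    Jint M env₀ O D η (Formula.dia a) c = {w | ∃ v, M.rel w v ∧ v ∈ Jint M env₀ O D η a c} := by
  have hn : restrictO (dmA O D c) (famO M env₀ (dmA O D c) (EA O D η c)) (Formula.dia a)
      = none := by
    refine restrictO_not_mem ?_
    intro h
    rcases dmA_only_nu h with ⟨y, χ, he⟩
    cases he
  simp only [Jint, semO, hn, Option.getD_none]

lemma Jint_box {M : Kripke W} {env₀ : ℕ → Set W} {O : Set Name} {D : Name → TD}
    {η : Name → Set W} {a : Formula} {c : Ann} :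
    Jint M env₀ O D η (Formula.box a) c = {w | ∀ v, M.rel w v → v ∈ Jint M env₀ O D η a c} := by
  have hn : restrictO (dmA O D c) (famO M env₀ (dmA O D c) (EA O D η c)) (Formula.box a)
      = none := by
    refine restrictO_not_mem ?_
    intro h
    rcases dmA_only_nu h with ⟨y, χ, he⟩
    cases he
  simp only [Jint, semO, hn, Option.getD_none]

lemma Jint_prop {M : Kripke W} {env₀ : ℕ → Set W} {O : Set Name} {D : Name → TD}
    {η : Name → Set W} {p : ℕ} {c : Ann} :
    Jint M env₀ O D η (Formula.prop p) c = {w | M.val p w} := by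
  have hn : restrictO (dmA O D c) (famO M env₀ (dmA O D c) (EA O D η c)) (Formula.prop p)
      = none := by
    refine restrictO_not_mem ?_
    intro h
    rcases dmA_only_nu h with ⟨y, χ, he⟩
    cases he
  simp only [Jint, semO, hn, Option.getD_none]

lemma Jint_nprop {M : Kripke W} {env₀ : ℕ → Set W} {O : Set Name} {D : Name → TD}
    {η : Name → Set W} {p : ℕ} {c : Ann} :
    Jint M env₀ O D η (Formula.nprop p) c = {w | ¬ M.val p w} := by
  have hn : restrictO (dmA O D c) (famO M env₀ (dmA O D c) (EA O D η c)) (Formula.nprop p)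
      = none := by
    refine restrictO_not_mem ?_
    intro h
    rcases dmA_only_nu h with ⟨y, χ, he⟩
    cases he
  simp only [Jint, semO, hn, Option.getD_none]

/-- Monotonicity of the interpretation under extension of the token data. -/
lemma Jint_mono {M : Kripke W} {env₀ : ℕ → Set W} {O O' : Set Name} {D D' : Name → TD}
    {η η' : Name → Set W} {c c' : Ann}
    (h1 : ∀ n, n ∈ c → n ∈ O → (n ∈ c' ∧ n ∈ O' ∧ ΘD D' n = ΘD D n ∧ η' n = η n))
    (hcl : ∀ Ψ ∈ dmA O' D' c', Ψ.Closed)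
    (φ : Formula) :
    Jint M env₀ O D η φ c ⊆ Jint M env₀ O' D' η' φ c' := by
  refine semO_fam_mono M env₀ ?_ ?_ hcl φ env₀
  · intro Ψ hΨ
    rcases hΨ with ⟨n, hn1, hn2, hn3⟩
    rcases h1 n hn1 hn2 with ⟨hc1, hc2, hc3, hc4⟩
    exact ⟨n, hc1, hc2, by rw [hc3, hn3]⟩
  · intro Ψ w hw
    rcases hw with ⟨n, hn1, hn2, hn3, hn4⟩
    rcases h1 n hn1 hn2 with ⟨hc1, hc2, hc3, hc4⟩
    exact ⟨n, hc1, hc2, by rw [hc3, hn3], by rw [hc4]; exact hn4⟩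

/-- The interpretation with the empty annotation is the plain semantics. -/
lemma Jint_nil {M : Kripke W} {env₀ : ℕ → Set W} {O : Set Name} {D : Name → TD}
    {η : Name → Set W} (φ : Formula) :
    Jint M env₀ O D η φ [] = sem M φ env₀ := by
  refine semO_none ?_ φ env₀
  intro ψ
  refine restrictO_not_mem ?_
  intro h
  rcases h with ⟨n, hn, _⟩
  cases hn

/-- Core semantic fact for the unfolding rule. -/
lemma unfold_core (M : Kripke W) (env₀ : ℕ → Set W) (dm : Set Formula) (E : Formula → Set W)
    (b : Bool) (x : ℕ) (φf : Formula)
    (hdmcl : ∀ Ψ ∈ dm, Ψ.Closed)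
    (hdmsh : ∀ Ψ ∈ dm, ∃ χ, Ψ = Formula.nu x χ)
    (hcl : (Formula.eta b x φf).Closed) :
    semO M (restrictO dm (famO M env₀ dm E)) (Formula.unfoldEta b x φf) env₀
      ⊆ semO M (restrictO dm (famO M env₀ dm E)) (Formula.eta b x φf) env₀ := by
  set σ := restrictO dm (famO M env₀ dm E) with hσ
  have hdom : ∀ ψ Sv, σ ψ = some Sv → ψ.Closed ∧ ∃ χ, ψ = Formula.nu x χ := by
    intro ψ Sv hs
    rcases restrictO_eq_some hs with ⟨hm, rfl⟩
    exact ⟨hdmcl ψ hm, hdmsh ψ hm⟩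
  cases b
  · -- μ-unfolding
    have he1 : Formula.eta false x φf = Formula.mu x φf := by simp [Formula.eta]
    have he2 : Formula.unfoldEta false x φf = Formula.unfoldMu x φf := by
      simp [Formula.unfoldEta]
    rw [he1] at hcl ⊢
    rw [he2]
    have hmu : σ (Formula.mu x φf) = none := by
      rw [hσ]
      refine restrictO_not_mem ?_
      intro h
      rcases hdmsh _ h with ⟨χ, hχ⟩
      cases hχ
    have hsub := semO_subst (M := M) (σ := σ) (x := x) (Θ := Formula.mu x φf) hcl hdom φf env₀
    rw [Formula.unfoldMu, hsub]
    have hval : semO M σ (Formula.mu x φf) env₀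
        = ⋂₀ {T : Set W | semO M σ φf (Function.update env₀ x T) ⊆ T} := by
      simp only [semO, hmu, Option.getD_none]
    rw [hval]
    have hmono : ∀ ⦃A B : Set W⦄, A ⊆ B →
        semO M σ φf (Function.update env₀ x A) ⊆ semO M σ φf (Function.update env₀ x B) := by
      intro A B hAB
      exact semO_env_mono φf (update_mono (fun y => subset_rfl) hAB)
    exact map_le_muSet hmono
  · -- ν-unfolding
    have he1 : Formula.eta true x φf = Formula.nu x φf := by simp [Formula.eta]
    have he2 : Formula.unfoldEta true x φf = Formula.unfoldNu x φf := by
      simp [Formula.unfoldEta]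
    rw [he1] at hcl ⊢
    rw [he2]
    have hsub := semO_subst (M := M) (σ := σ) (x := x) (Θ := Formula.nu x φf) hcl hdom φf env₀
    rw [Formula.unfoldNu, hsub]
    by_cases hmem : Formula.nu x φf ∈ dm
    · have hval : semO M σ (Formula.nu x φf) env₀ = famO M env₀ dm E (Formula.nu x φf) := by
        rw [hσ]
        exact semO_some (restrictO_mem hmem) env₀
      rw [hval]
      have hfix := famO_nu M env₀ dm E x φf
      rw [← hσ] at hfix
      refine subset_trans ?_ (subset_of_eq hfix.symm)
      exact Set.subset_union_right
    · have hnone : σ (Formula.nu x φf) = none := by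
        rw [hσ]
        exact restrictO_not_mem hmem
      have hval : semO M σ (Formula.nu x φf) env₀
          = ⋃₀ {T : Set W | T ⊆ semO M σ φf (Function.update env₀ x T)} := by
        simp only [semO, hnone, Option.getD_none]
      rw [hval]
      have hmono : ∀ ⦃A B : Set W⦄, A ⊆ B →
          semO M σ φf (Function.update env₀ x A) ⊆ semO M σ φf (Function.update env₀ x B) := by
        intro A B hAB
        exact semO_env_mono φf (update_mono (fun y => subset_rfl) hAB)
      exact map_le_nuSet hmono

end CloSoundAux


namespace CloSoundAux

open Formula

variable {W : Type}

lemma prefix_snoc (u : List ℕ) (n : ℕ) : u <+: u ++ [n] := ⟨[n], rfl⟩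

lemma ne_snoc (u : List ℕ) (n : ℕ) : u ≠ u ++ [n] := by
  intro h
  have := congrArg List.length h
  simp at this

lemma prefix_of_prefix_snoc {v u : List ℕ} {n : ℕ} (h : v <+: u ++ [n])
    (hne : v ≠ u ++ [n]) : v <+: u := by
  have hle : v.length ≤ u.length + 1 := by
    have := h.length_le
    simpa using this
  have hlt : v.length ≤ u.length := by
    rcases Nat.lt_or_ge v.length (u.length + 1) with h1 | h1
    · omega
    · exfalso
      have heq : v.length = (u ++ [n]).length := by simp; omega
      exact hne (List.IsPrefix.eq_of_length h heq)
  exact List.prefix_of_prefix_length_le h (prefix_snoc u n) hlt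

def DescS {c : Bool} {Δ₀ : ASequent} (ρ : CloDeriv c Δ₀) (u : List ℕ) : Set (List ℕ) :=
  {v | v ∈ ρ.tree ∧ u <+: v ∧ u ≠ v}

lemma desc_lt {c : Bool} {Δ₀ : ASequent} {ρ : CloDeriv c Δ₀} (hfin : ρ.tree.Finite)
    {u : List ℕ} {n : ℕ} (hc : u ++ [n] ∈ ρ.tree) :
    (DescS ρ (u ++ [n])).ncard < (DescS ρ u).ncard := by
  have hsub : DescS ρ (u ++ [n]) ⊆ DescS ρ u := by
    intro v hv
    rcases hv with ⟨hv1, hv2, hv3⟩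
    refine ⟨hv1, (prefix_snoc u n).trans hv2, ?_⟩
    intro he
    subst he
    have h1 := hv2.length_le
    simp at h1
  have hmem : u ++ [n] ∈ DescS ρ u := ⟨hc, prefix_snoc u n, ne_snoc u n⟩
  have hnmem : u ++ [n] ∉ DescS ρ (u ++ [n]) := by
    intro h
    exact h.2.2 rfl
  have hss : DescS ρ (u ++ [n]) ⊂ DescS ρ u := by
    refine ⟨hsub, ?_⟩
    intro hsup
    exact hnmem (hsup hmem)
  exact Set.ncard_lt_ncard hss (hfin.subset (fun v hv => hv.1))

def Coh {Γ₀ : Sequent} (ρ : CloDeriv false (annSeq Γ₀)) (M : Kripke W) (env₀ : ℕ → Set W)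
    (u : List ℕ) (O : Set Name) (D : Name → TD) (η : Name → Set W) : Prop :=
  (∀ t ∈ O, ∃ v, v ∈ ρ.tree ∧ v <+: u ∧ v ≠ u ∧
      ρ.rule v = CloRule.clo (D t).1 (D t).2.1 (D t).2.2.1 (D t).2.2.2 t) ∧
  (∀ v, v ∈ ρ.tree → v <+: u → v ≠ u → ∀ Γc x φf a x', ρ.rule v = CloRule.clo Γc x φf a x' →
      x' ∈ O ∧ D x' = (Γc, x, φf, a)) ∧
  (∀ t ∈ O, t.1 = (D t).2.1 ∧ (ΘD D t).Closed) ∧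
  (∀ t ∈ O, ∀ w, w ∉ SInt M env₀ O D η ((D t).1) → w ∈ η t)

lemma coh_extend {Γ₀ : Sequent} {ρ : CloDeriv false (annSeq Γ₀)} {M : Kripke W}
    {env₀ : ℕ → Set W} {u : List ℕ} {O : Set Name} {D : Name → TD} {η : Name → Set W}
    (hcoh : Coh ρ M env₀ u O D η)
    (hnc : ∀ Γc x φf a x', ρ.rule u ≠ CloRule.clo Γc x φf a x') (n : ℕ) :
    Coh ρ M env₀ (u ++ [n]) O D η := by
  obtain ⟨h1, h2, h3, h4⟩ := hcoh
  refine ⟨?_, ?_, h3, h4⟩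
  · intro t ht
    rcases h1 t ht with ⟨v, hv1, hv2, hv3, hv4⟩
    refine ⟨v, hv1, hv2.trans (prefix_snoc u n), ?_, hv4⟩
    intro he
    subst he
    have := hv2.length_le
    simp at this
  · intro v hv hpre hne Γc x φf a x' hrv
    by_cases hvu : v = u
    · subst hvu
      exact absurd hrv (hnc Γc x φf a x')
    · exact h2 v hv (prefix_of_prefix_snoc hpre hne) hvu Γc x φf a x' hrv

lemma label_child_of_rule {c : Bool} {Δ₀ : ASequent} {ρ : CloDeriv c Δ₀} {u : List ℕ}
    (hu : u ∈ ρ.tree) {r : CloRule} (hr : ρ.rule u = r) {n : ℕ}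
    (hn : n < r.prems.length) : ρ.label (u ++ [n]) = r.prems.get ⟨n, hn⟩ := by
  subst hr
  exact ρ.label_child u hu n hn

lemma child_mem_of_rule {c : Bool} {Δ₀ : ASequent} {ρ : CloDeriv c Δ₀} {u : List ℕ}
    (hu : u ∈ ρ.tree) {r : CloRule} (hr : ρ.rule u = r) {n : ℕ}
    (hn : n < r.prems.length) : u ++ [n] ∈ ρ.tree := by
  subst hr
  exact (ρ.child_iff u hu n).2 hn

end CloSoundAux


namespace CloSoundAux

open Formula

variable {W : Type}

lemma ΘD_congr {D D' : Name → TD} {m : Name} (h : D' m = D m) : ΘD D' m = ΘD D m := by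
  rw [ΘD, ΘD, h]

lemma main_lemma (Γ₀ : Sequent) (hΓ₀ : ClosedSeq Γ₀) (ρ : CloDeriv false (annSeq Γ₀))
    (hfin : ρ.tree.Finite) (M : Kripke W) (env₀ : ℕ → Set W) :
    ∀ (k : ℕ) (u : List ℕ), u ∈ ρ.tree → (DescS ρ u).ncard ≤ k →
      ∀ (O : Set Name) (D : Name → TD) (η : Name → Set W), Coh ρ M env₀ u O D η →
      ∀ w, w ∈ SInt M env₀ O D η (ρ.label u) := by
  intro k
  induction k using Nat.strong_induction_on with
  | _ k ih =>
  intro u hu hk O D η hcoh w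
  cases hr : ρ.rule u with
  | ax p =>
    have hlabr : ρ.label u = {(Formula.prop p, ([] : Ann)), (Formula.nprop p, ([] : Ann))} := by
      rw [ρ.label_concl u hu, hr]; rfl
    by_cases hv : M.val p w
    · refine ⟨(Formula.prop p, []), ?_, ?_⟩
      · rw [hlabr]; exact Finset.mem_insert_self _ _
      · rw [Jint_prop]; exact hv
    · refine ⟨(Formula.nprop p, []), ?_, ?_⟩
      · rw [hlabr]; exact Finset.mem_insert_of_mem (Finset.mem_singleton_self _)
      · rw [Jint_nprop]; exact hv
  | orR Γc φ1 ψ1 a =>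
    have hlabr : ρ.label u = insert (Formula.or φ1 ψ1, a) Γc := by
      rw [ρ.label_concl u hu, hr]; rfl
    have hch : u ++ [0] ∈ ρ.tree := child_mem_of_rule hu hr (by simp [CloRule.prems])
    have hlabc : ρ.label (u ++ [0]) = insert (φ1, a) (insert (ψ1, a) Γc) := by
      rw [label_child_of_rule hu hr (n := 0) (by simp [CloRule.prems])]
      rfl
    have hprem := ih ((DescS ρ (u ++ [0])).ncard) (lt_of_lt_of_le (desc_lt hfin hch) hk)
      (u ++ [0]) hch le_rfl O D η (coh_extend hcoh (by intro _ _ _ _ _ h; rw [hr] at h; cases h) 0) w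
    rw [hlabc] at hprem
    rcases hprem with ⟨p1, hp1, hw1⟩
    rcases Finset.mem_insert.1 hp1 with he | hp1'
    · subst he
      refine ⟨(Formula.or φ1 ψ1, a), by rw [hlabr]; exact Finset.mem_insert_self _ _, ?_⟩
      rw [Jint_or]; exact Or.inl hw1
    rcases Finset.mem_insert.1 hp1' with he | hp1''
    · subst he
      refine ⟨(Formula.or φ1 ψ1, a), by rw [hlabr]; exact Finset.mem_insert_self _ _, ?_⟩
      rw [Jint_or]; exact Or.inr hw1
    · exact ⟨p1, by rw [hlabr]; exact Finset.mem_insert_of_mem hp1'', hw1⟩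
  | andR Γc φ1 ψ1 a =>
    have hlabr : ρ.label u = insert (Formula.and φ1 ψ1, a) Γc := by
      rw [ρ.label_concl u hu, hr]; rfl
    have hnc : ∀ Γc2 x2 φf2 a2 x2', ρ.rule u ≠ CloRule.clo Γc2 x2 φf2 a2 x2' := by
      intro _ _ _ _ _ h; rw [hr] at h; cases h
    have hch0 : u ++ [0] ∈ ρ.tree := child_mem_of_rule hu hr (by simp [CloRule.prems])
    have hch1 : u ++ [1] ∈ ρ.tree := child_mem_of_rule hu hr (by simp [CloRule.prems])
    have hlabc0 : ρ.label (u ++ [0]) = insert (φ1, a) Γc := by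
      rw [label_child_of_rule hu hr (n := 0) (by simp [CloRule.prems])]
      rfl
    have hlabc1 : ρ.label (u ++ [1]) = insert (ψ1, a) Γc := by
      rw [label_child_of_rule hu hr (n := 1) (by simp [CloRule.prems])]
      rfl
    have hprem0 := ih ((DescS ρ (u ++ [0])).ncard) (lt_of_lt_of_le (desc_lt hfin hch0) hk)
      (u ++ [0]) hch0 le_rfl O D η (coh_extend hcoh hnc 0) w
    have hprem1 := ih ((DescS ρ (u ++ [1])).ncard) (lt_of_lt_of_le (desc_lt hfin hch1) hk)
      (u ++ [1]) hch1 le_rfl O D η (coh_extend hcoh hnc 1) w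
    rw [hlabc0] at hprem0
    rw [hlabc1] at hprem1
    rcases hprem0 with ⟨p0, hp0, hw0⟩
    rcases Finset.mem_insert.1 hp0 with he0 | hp0'
    · rcases hprem1 with ⟨p1, hp1, hw1⟩
      rcases Finset.mem_insert.1 hp1 with he1 | hp1'
      · subst he0; subst he1
        refine ⟨(Formula.and φ1 ψ1, a), by rw [hlabr]; exact Finset.mem_insert_self _ _, ?_⟩
        rw [Jint_and]; exact ⟨hw0, hw1⟩
      · exact ⟨p1, by rw [hlabr]; exact Finset.mem_insert_of_mem hp1', hw1⟩
    · exact ⟨p0, by rw [hlabr]; exact Finset.mem_insert_of_mem hp0', hw0⟩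
  | weak Γc φ1 a =>
    have hlabr : ρ.label u = insert (φ1, a) Γc := by
      rw [ρ.label_concl u hu, hr]; rfl
    have hch : u ++ [0] ∈ ρ.tree := child_mem_of_rule hu hr (by simp [CloRule.prems])
    have hlabc : ρ.label (u ++ [0]) = Γc := by
      rw [label_child_of_rule hu hr (n := 0) (by simp [CloRule.prems])]
      rfl
    have hprem := ih ((DescS ρ (u ++ [0])).ncard) (lt_of_lt_of_le (desc_lt hfin hch) hk)
      (u ++ [0]) hch le_rfl O D η
      (coh_extend hcoh (by intro _ _ _ _ _ h; rw [hr] at h; cases h) 0) w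
    rw [hlabc] at hprem
    rcases hprem with ⟨p1, hp1, hw1⟩
    exact ⟨p1, by rw [hlabr]; exact Finset.mem_insert_of_mem hp1, hw1⟩
  | boxR Γc φ1 a =>
    have hlabr : ρ.label u
        = insert (Formula.box φ1, a) (Γc.image (fun q => (Formula.dia q.1, q.2))) := by
      rw [ρ.label_concl u hu, hr]; rfl
    have hch : u ++ [0] ∈ ρ.tree := child_mem_of_rule hu hr (by simp [CloRule.prems])
    have hlabc : ρ.label (u ++ [0]) = insert (φ1, a) Γc := by
      rw [label_child_of_rule hu hr (n := 0) (by simp [CloRule.prems])]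
      rfl
    have hnc : ∀ Γc2 x2 φf2 a2 x2', ρ.rule u ≠ CloRule.clo Γc2 x2 φf2 a2 x2' := by
      intro _ _ _ _ _ h; rw [hr] at h; cases h
    by_cases hall : ∀ v, M.rel w v → v ∈ Jint M env₀ O D η φ1 a
    · refine ⟨(Formula.box φ1, a), by rw [hlabr]; exact Finset.mem_insert_self _ _, ?_⟩
      rw [Jint_box]; exact hall
    · push_neg at hall
      rcases hall with ⟨v, hrel, hnv⟩
      have hprem := ih ((DescS ρ (u ++ [0])).ncard) (lt_of_lt_of_le (desc_lt hfin hch) hk)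
        (u ++ [0]) hch le_rfl O D η (coh_extend hcoh hnc 0) v
      rw [hlabc] at hprem
      rcases hprem with ⟨p1, hp1, hv1⟩
      rcases Finset.mem_insert.1 hp1 with he | hp1'
      · subst he; exact absurd hv1 hnv
      · refine ⟨(Formula.dia p1.1, p1.2), ?_, ?_⟩
        · rw [hlabr]
          exact Finset.mem_insert_of_mem (Finset.mem_image_of_mem _ hp1')
        · rw [Jint_dia]; exact ⟨v, hrel, hv1⟩
  | unfold Γc b x φf a =>
    have hok := ρ.ok u hu
    rw [hr] at hok
    rw [stripSeq_annSeq] at hok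
    have hnames : ∀ m ∈ a, m.1 = x := fun m hm => varle_eq hΓ₀ (hok m hm)
    have hlabr : ρ.label u = insert (Formula.eta b x φf, a) Γc := by
      rw [ρ.label_concl u hu, hr]; rfl
    have hcleta : (Formula.eta b x φf).Closed :=
      label_closed hΓ₀ ρ u hu (Formula.eta b x φf, a)
        (by rw [hlabr]; exact Finset.mem_insert_self _ _)
    have hch : u ++ [0] ∈ ρ.tree := child_mem_of_rule hu hr (by simp [CloRule.prems])
    have hlabc : ρ.label (u ++ [0]) = insert (Formula.unfoldEta b x φf, a) Γc := by
      rw [label_child_of_rule hu hr (n := 0) (by simp [CloRule.prems])]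
      rfl
    have hprem := ih ((DescS ρ (u ++ [0])).ncard) (lt_of_lt_of_le (desc_lt hfin hch) hk)
      (u ++ [0]) hch le_rfl O D η
      (coh_extend hcoh (by intro _ _ _ _ _ h; rw [hr] at h; cases h) 0) w
    rw [hlabc] at hprem
    rcases hprem with ⟨p1, hp1, hw1⟩
    rcases Finset.mem_insert.1 hp1 with he | hp1'
    · subst he
      refine ⟨(Formula.eta b x φf, a), by rw [hlabr]; exact Finset.mem_insert_self _ _, ?_⟩
      refine unfold_core M env₀ (dmA O D a) (EA O D η a) b x φf ?_ ?_ hcleta hw1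
      · intro Ψ hΨ
        rcases hΨ with ⟨m, hm1, hm2, hm3⟩
        rw [← hm3]
        exact (hcoh.2.2.1 m hm2).2
      · intro Ψ hΨ
        rcases hΨ with ⟨m, hm1, hm2, hm3⟩
        refine ⟨(D m).2.2.1, ?_⟩
        rw [← hm3, ΘD]
        have h1 : (D m).2.1 = m.1 := ((hcoh.2.2.1 m hm2).1).symm
        rw [h1, hnames m hm1]
    · exact ⟨p1, by rw [hlabr]; exact Finset.mem_insert_of_mem hp1', hw1⟩
  | exp l =>
    have hok := ρ.ok u hu
    rw [hr] at hok
    have hlabr : ρ.label u = (l.map (fun t => (t.1, t.2.2))).toFinset := by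
      rw [ρ.label_concl u hu, hr]; rfl
    have hch : u ++ [0] ∈ ρ.tree := child_mem_of_rule hu hr (by simp [CloRule.prems])
    have hlabc : ρ.label (u ++ [0]) = (l.map (fun t => (t.1, t.2.1))).toFinset := by
      rw [label_child_of_rule hu hr (n := 0) (by simp [CloRule.prems])]
      rfl
    have hprem := ih ((DescS ρ (u ++ [0])).ncard) (lt_of_lt_of_le (desc_lt hfin hch) hk)
      (u ++ [0]) hch le_rfl O D η
      (coh_extend hcoh (by intro _ _ _ _ _ h; rw [hr] at h; cases h) 0) w
    rw [hlabc] at hprem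
    rcases hprem with ⟨p1, hp1, hw1⟩
    rcases List.mem_map.1 (List.mem_toFinset.1 hp1) with ⟨t, ht, hte⟩
    refine ⟨(t.1, t.2.2), ?_, ?_⟩
    · rw [hlabr]
      exact List.mem_toFinset.2 (List.mem_map.2 ⟨t, ht, rfl⟩)
    · rw [← hte] at hw1
      refine Jint_mono ?_ ?_ t.1 hw1
      · intro m hm1 hm2
        exact ⟨(hok t ht).subset hm1, hm2, rfl, rfl⟩
      · intro Ψ hΨ
        rcases hΨ with ⟨m, hm1, hm2, hm3⟩
        rw [← hm3]
        exact (hcoh.2.2.1 m hm2).2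
  | asm Γc x φf a x' =>
    have hlabr : ρ.label u = insert (Formula.nu x φf, a ++ [x']) Γc := by
      rw [ρ.label_concl u hu, hr]; rfl
    rcases ρ.discharged u hu Γc x φf a x' hr with ⟨v, hpre, hne, hvt, hrv⟩
    rcases hcoh.2.1 v hvt hpre hne Γc x φf a x' hrv with ⟨hxO, hD⟩
    by_cases hw : w ∈ SInt M env₀ O D η Γc
    · rcases hw with ⟨p, hp, hwp⟩
      exact ⟨p, by rw [hlabr]; exact Finset.mem_insert_of_mem hp, hwp⟩
    · have hη := hcoh.2.2.2 x' hxO w (by rw [hD]; exact hw)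
      refine ⟨(Formula.nu x φf, a ++ [x']), by rw [hlabr]; exact Finset.mem_insert_self _ _, ?_⟩
      have hΘx : ΘD D x' = Formula.nu x φf := by rw [ΘD, hD]
      have hmem : Formula.nu x φf ∈ dmA O D (a ++ [x']) :=
        ⟨x', List.mem_append_right _ (by simp), hxO, hΘx⟩
      show w ∈ Jint M env₀ O D η (Formula.nu x φf) (a ++ [x'])
      have hval : Jint M env₀ O D η (Formula.nu x φf) (a ++ [x'])
          = famO M env₀ (dmA O D (a ++ [x'])) (EA O D η (a ++ [x'])) (Formula.nu x φf) :=
        semO_some (restrictO_mem hmem) env₀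
      rw [hval]
      have hfix := famO_nu M env₀ (dmA O D (a ++ [x'])) (EA O D η (a ++ [x'])) x φf
      rw [hfix]
      left
      exact ⟨x', List.mem_append_right _ (by simp), hxO, hΘx, hη⟩
  | cut Γc A =>
    have := ρ.cut_ok u hu (by rw [hr]; trivial)
    cases this
  | clo Γc x φf a x' =>
    have hok := ρ.ok u hu
    rw [hr] at hok
    obtain ⟨hx1, hannle, hfresh⟩ := hok
    rw [stripSeq_annSeq] at hannle
    have hnames : ∀ m ∈ a, m.1 = x := fun m hm => varle_eq hΓ₀ (hannle m hm)
    have hlabr : ρ.label u = insert (Formula.nu x φf, a) Γc := by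
      rw [ρ.label_concl u hu, hr]; rfl
    have hΞcl : (Formula.nu x φf).Closed :=
      label_closed hΓ₀ ρ u hu (Formula.nu x φf, a)
        (by rw [hlabr]; exact Finset.mem_insert_self _ _)
    have hx'O : x' ∉ O := by
      intro hmem
      rcases hcoh.1 x' hmem with ⟨v, hv1, hv2, hv3, hv4⟩
      have := ρ.token_unique u hu v hv1 x' (by rw [hr]; rfl) (by rw [hv4]; rfl)
      exact hv3 this.symm
    set Sset : Set W := {w0 | w0 ∉ SInt M env₀ O D η Γc} with hSdef
    set O' : Set Name := insert x' O with hO'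
    set D' : Name → TD := Function.update D x' ((Γc, x, φf, a) : TD) with hD'
    set η' : Name → Set W := Function.update η x' Sset with hη'
    have hD'x : D' x' = ((Γc, x, φf, a) : TD) := Function.update_self _ _ _
    have hD'ne : ∀ m, m ≠ x' → D' m = D m := fun m hm => Function.update_of_ne hm _ _
    have hη'x : η' x' = Sset := Function.update_self _ _ _
    have hη'ne : ∀ m, m ≠ x' → η' m = η m := fun m hm => Function.update_of_ne hm _ _
    have hJpres : ∀ (ψ : Formula) (b : Ann), x' ∉ b →
        Jint M env₀ O' D' η' ψ b = Jint M env₀ O D η ψ b := by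
      intro ψ b hb
      apply Set.Subset.antisymm
      · refine Jint_mono ?_ ?_ ψ
        · intro m hm1 hm2
          have hmx : m ≠ x' := fun he => hb (he ▸ hm1)
          rcases Set.mem_insert_iff.1 hm2 with he | hm2'
          · exact absurd he hmx
          · exact ⟨hm1, hm2', (ΘD_congr (hD'ne m hmx)).symm, (hη'ne m hmx).symm⟩
        · intro Ψ hΨ
          rcases hΨ with ⟨m, hm1, hm2, hm3⟩
          rw [← hm3]
          exact (hcoh.2.2.1 m hm2).2
      · refine Jint_mono ?_ ?_ ψ
        · intro m hm1 hm2
          have hmx : m ≠ x' := fun he => hb (he ▸ hm1)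
          exact ⟨hm1, Set.mem_insert_iff.2 (Or.inr hm2), ΘD_congr (hD'ne m hmx), hη'ne m hmx⟩
        · intro Ψ hΨ
          rcases hΨ with ⟨m, hm1, hm2, hm3⟩
          have hmx : m ≠ x' := fun he => hb (he ▸ hm1)
          rw [← hm3, ΘD_congr (hD'ne m hmx)]
          rcases Set.mem_insert_iff.1 hm2 with he | hm2'
          · exact absurd he hmx
          · exact (hcoh.2.2.1 m hm2').2
    have hSpres : SInt M env₀ O' D' η' Γc = SInt M env₀ O D η Γc := by
      ext w0
      constructor
      · rintro ⟨p, hp, hwp⟩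
        refine ⟨p, hp, ?_⟩
        rw [← hJpres p.1 p.2 (hfresh p hp)]
        exact hwp
      · rintro ⟨p, hp, hwp⟩
        refine ⟨p, hp, ?_⟩
        rw [hJpres p.1 p.2 (hfresh p hp)]
        exact hwp
    have hch : u ++ [0] ∈ ρ.tree := child_mem_of_rule hu hr (by simp [CloRule.prems])
    have hcoh' : Coh ρ M env₀ (u ++ [0]) O' D' η' := by
      obtain ⟨h1, h2, h3, h4⟩ := hcoh
      refine ⟨?_, ?_, ?_, ?_⟩
      · intro t ht
        rcases Set.mem_insert_iff.1 ht with he | ht'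
        · subst he
          refine ⟨u, hu, prefix_snoc u 0, ne_snoc u 0, ?_⟩
          rw [hD'x, hr]
        · rcases h1 t ht' with ⟨v, hv1, hv2, hv3, hv4⟩
          have htx : t ≠ x' := fun he => hx'O (he ▸ ht')
          refine ⟨v, hv1, hv2.trans (prefix_snoc u 0), ?_, by rw [hD'ne t htx]; exact hv4⟩
          intro he
          subst he
          have := hv2.length_le
          simp at this
      · intro v hv hpre hne Γc2 x2 φf2 a2 x2' hrv
        by_cases hvu : v = u
        · subst hvu
          rw [hr] at hrv
          injection hrv with e1 e2 e3 e4 e5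
          subst e1; subst e2; subst e3; subst e4; subst e5
          exact ⟨Set.mem_insert _ _, by rw [hD'x]⟩
        · have hpre' : v <+: u := prefix_of_prefix_snoc hpre hne
          rcases h2 v hv hpre' hvu Γc2 x2 φf2 a2 x2' hrv with ⟨hxm, hDm⟩
          have hx2x' : x2' ≠ x' := by
            intro he
            subst he
            have := ρ.token_unique u hu v hv x2' (by rw [hr]; rfl) (by rw [hrv]; rfl)
            exact hvu this.symm
          exact ⟨Set.mem_insert_iff.2 (Or.inr hxm), by rw [hD'ne _ hx2x', hDm]⟩
      · intro t ht
        rcases Set.mem_insert_iff.1 ht with he | ht'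
        · subst he
          constructor
          · rw [hD'x]; exact hx1
          · rw [ΘD, hD'x]; exact hΞcl
        · have htx : t ≠ x' := fun he => hx'O (he ▸ ht')
          exact ⟨by rw [hD'ne t htx]; exact (h3 t ht').1,
            by rw [ΘD_congr (hD'ne t htx)]; exact (h3 t ht').2⟩
      · intro t ht w0 hw0
        rcases Set.mem_insert_iff.1 ht with he | ht'
        · subst he
          rw [hη'x]
          rw [hD'x] at hw0
          rw [hSpres] at hw0
          exact hw0
        · have htx : t ≠ x' := fun he => hx'O (he ▸ ht')
          rw [hη'ne t htx]
          refine h4 t ht' w0 ?_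
          intro hmem
          refine hw0 ?_
          rw [hD'ne t htx]
          rcases hmem with ⟨p, hp, hwp⟩
          refine ⟨p, hp, ?_⟩
          refine Jint_mono ?_ ?_ p.1 hwp
          · intro m hm1 hm2
            have hmx : m ≠ x' := fun he => hx'O (he ▸ hm2)
            exact ⟨hm1, Set.mem_insert_iff.2 (Or.inr hm2), ΘD_congr (hD'ne m hmx), hη'ne m hmx⟩
          · intro Ψ hΨ
            rcases hΨ with ⟨m, hm1, hm2, hm3⟩
            rw [← hm3]
            rcases Set.mem_insert_iff.1 hm2 with he | hm2'
            · subst he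
              rw [ΘD, hD'x]
              exact hΞcl
            · have hmx : m ≠ x' := fun he => hx'O (he ▸ hm2')
              rw [ΘD_congr (hD'ne m hmx)]
              exact (h3 m hm2').2
    have hlabc : ρ.label (u ++ [0]) = insert (Formula.unfoldNu x φf, a ++ [x']) Γc := by
      rw [label_child_of_rule hu hr (n := 0) (by simp [CloRule.prems])]
      rfl
    have hS : ∀ w0 ∈ Sset, w0 ∈ Jint M env₀ O' D' η' (Formula.unfoldNu x φf) (a ++ [x']) := by
      intro w0 hw0
      have hcall := ih ((DescS ρ (u ++ [0])).ncard) (lt_of_lt_of_le (desc_lt hfin hch) hk)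
        (u ++ [0]) hch le_rfl O' D' η' hcoh' w0
      rw [hlabc] at hcall
      rcases hcall with ⟨p, hp, hwp⟩
      rcases Finset.mem_insert.1 hp with he | hp'
      · subst he; exact hwp
      · exfalso
        refine hw0 ?_
        rw [← hSpres]
        exact ⟨p, hp', hwp⟩
    have hdmeq : dmA O' D' (a ++ [x']) = dmA O D a ∪ {Formula.nu x φf} := by
      ext Ψ
      constructor
      · rintro ⟨m, hm1, hm2, hm3⟩
        by_cases hmx : m = x'
        · subst hmx
          right
          rw [← hm3, ΘD, hD'x]
          rfl
        · left
          have hm1' : m ∈ a := by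
            rcases List.mem_append.1 hm1 with h | h
            · exact h
            · simp at h; exact absurd h hmx
          have hm2' : m ∈ O := by
            rcases Set.mem_insert_iff.1 hm2 with h | h
            · exact absurd h hmx
            · exact h
          refine ⟨m, hm1', hm2', ?_⟩
          rw [← ΘD_congr (hD'ne m hmx)]
          exact hm3
      · intro h
        rcases h with ⟨m, hm1, hm2, hm3⟩ | h
        · have hmx : m ≠ x' := fun he => hx'O (he ▸ hm2)
          refine ⟨m, List.mem_append_left _ hm1, Set.mem_insert_iff.2 (Or.inr hm2), ?_⟩
          rw [ΘD_congr (hD'ne m hmx)]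
          exact hm3
        · rw [Set.mem_singleton_iff] at h
          subst h
          exact ⟨x', List.mem_append_right _ (by simp), Set.mem_insert _ _, by rw [ΘD, hD'x]⟩
    have hEeq : EA O' D' η' (a ++ [x'])
        = fun Ψ => EA (W := W) O D η a Ψ ∪ (if Ψ = Formula.nu x φf then Sset else ∅) := by
      funext Ψ
      ext w0
      constructor
      · rintro ⟨m, hm1, hm2, hm3, hm4⟩
        by_cases hmx : m = x'
        · subst hmx
          right
          have hΨe : Ψ = Formula.nu x φf := by
            rw [← hm3, ΘD, hD'x]
          rw [if_pos hΨe]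
          rw [hη'x] at hm4
          exact hm4
        · left
          have hm1' : m ∈ a := by
            rcases List.mem_append.1 hm1 with h | h
            · exact h
            · simp at h; exact absurd h hmx
          have hm2' : m ∈ O := by
            rcases Set.mem_insert_iff.1 hm2 with h | h
            · exact absurd h hmx
            · exact h
          refine ⟨m, hm1', hm2', ?_, ?_⟩
          · rw [← ΘD_congr (hD'ne m hmx)]; exact hm3
          · rw [← hη'ne m hmx]; exact hm4
      · intro h
        rcases h with ⟨m, hm1, hm2, hm3, hm4⟩ | h
        · have hmx : m ≠ x' := fun he => hx'O (he ▸ hm2)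
          refine ⟨m, List.mem_append_left _ hm1, Set.mem_insert_iff.2 (Or.inr hm2), ?_, ?_⟩
          · rw [ΘD_congr (hD'ne m hmx)]; exact hm3
          · rw [hη'ne m hmx]; exact hm4
        · by_cases hΨe : Ψ = Formula.nu x φf
          · rw [if_pos hΨe] at h
            refine ⟨x', List.mem_append_right _ (by simp), Set.mem_insert _ _, ?_, ?_⟩
            · rw [ΘD, hD'x, hΨe]
            · rw [hη'x]; exact h
          · rw [if_neg hΨe] at h
            exact absurd h (Set.notMem_empty w0)
    have hprem : Sset ⊆ semO M
        (restrictO (dmA O D a ∪ {Formula.nu x φf})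
          (famO M env₀ (dmA O D a ∪ {Formula.nu x φf})
            (fun Ψ => EA O D η a Ψ ∪ (if Ψ = Formula.nu x φf then Sset else ∅))))
        (φf.subst x (Formula.nu x φf)) env₀ := by
      intro w0 hw0
      have := hS w0 hw0
      rw [Jint, hdmeq, hEeq] at this
      exact this
    have hcore := clo_core M env₀ (dmA O D a) (EA O D η a) x φf Sset
      (by
        intro Ψ hΨ
        rcases hΨ with ⟨m, hm1, hm2, hm3⟩
        rw [← hm3]
        exact (hcoh.2.2.1 m hm2).2)
      (by
        intro Ψ hΨ
        rcases hΨ with ⟨m, hm1, hm2, hm3⟩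
        refine ⟨(D m).2.2.1, ?_⟩
        rw [← hm3, ΘD]
        have h1 : (D m).2.1 = m.1 := ((hcoh.2.2.1 m hm2).1).symm
        rw [h1, hnames m hm1])
      hΞcl
      (by
        intro hnm
        rw [Set.eq_empty_iff_forall_notMem]
        intro w1 hw1
        rcases hw1 with ⟨m, hm1, hm2, hm3, _⟩
        exact hnm ⟨m, hm1, hm2, hm3⟩)
      hprem
    by_cases hw : w ∈ SInt M env₀ O D η Γc
    · rcases hw with ⟨p, hp, hwp⟩
      exact ⟨p, by rw [hlabr]; exact Finset.mem_insert_of_mem hp, hwp⟩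
    · refine ⟨(Formula.nu x φf, a), by rw [hlabr]; exact Finset.mem_insert_self _ _, ?_⟩
      exact hcore hw

end CloSoundAux


/-- Clo is sound: every sequent that has a Clo proof is valid. -/
theorem clo_sound (Γ : Sequent) (hΓ : ClosedSeq Γ)
    (hprov : ∃ ρ : CloDeriv false (annSeq Γ), ρ.tree.Finite) :
    ValidSeq Γ := by
  intro W M env w
  obtain ⟨ρ, hfin⟩ := hprov
  have hcoh : CloSoundAux.Coh ρ M env ([] : List ℕ) (∅ : Set Name)
      (fun _ => ((∅, 0, Formula.prop 0, []) : CloSoundAux.TD)) (fun _ => (∅ : Set W)) := by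
    refine ⟨?_, ?_, ?_, ?_⟩
    · intro t ht
      exact absurd ht (Set.notMem_empty t)
    · intro v hv hpre hne
      exact absurd (List.prefix_nil.1 hpre) hne
    · intro t ht
      exact absurd ht (Set.notMem_empty t)
    · intro t ht
      exact absurd ht (Set.notMem_empty t)
  have hmain := CloSoundAux.main_lemma Γ hΓ ρ hfin M env
    ((CloSoundAux.DescS ρ []).ncard) [] ρ.root_mem le_rfl
    (∅ : Set Name) (fun _ => ((∅, 0, Formula.prop 0, []) : CloSoundAux.TD))
    (fun _ => (∅ : Set W)) hcoh w
  rw [ρ.label_root] at hmain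
  rcases hmain with ⟨p, hp, hw⟩
  rcases Finset.mem_image.1 hp with ⟨φ, hφ, he⟩
  subst he
  refine ⟨φ, hφ, ?_⟩
  replace hw := (congrArg (w ∈ ·) (CloSoundAux.Jint_nil (M := M) (env₀ := env) (O := ∅)
    (D := fun _ => ((∅, 0, Formula.prop 0, []) : CloSoundAux.TD)) (η := fun _ => (∅ : Set W)) φ)).mp hw
  exact hw
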